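/- arXiv:1710.10542 — 3 statements merged into one kernel-verified Lean document; each statement's English description precedes it below -/
import Mathlib

section
/- Let F be a free group on a finite set. Then every non-trivial element g of F satisfies scl(g) ≥ 1/6. -/
set_option linter.unusedSectionVars false
set_option linter.unusedVariables false
set_option maxHeartbeats 1000000

namespace SclProof

open FreeGroup List Finset
open scoped Classical
open scoped commutatorElement

section Words
variable {α : Type*} [DecidableEq α]
/-- invert one letter -/
def inv1 (a : α × Bool) : α × Bool := (a.1, !a.2)

@[simp] lemma inv1_inv1 (a : α × Bool) : inv1 (inv1 a) = a := by
  cases a with | mk x b => simp [inv1]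

lemma inv1_ne (a : α × Bool) : inv1 a ≠ a := by
  cases a with | mk x b => cases b <;> simp [inv1]

lemma inv1_eq_comm {a b : α × Bool} : b = inv1 a ↔ a = inv1 b := by
  constructor <;> (rintro rfl; simp)

lemma invRev_append (u v : List (α × Bool)) :
    invRev (u ++ v) = invRev v ++ invRev u := by
  simp [invRev]

lemma invRev_concat (u : List (α × Bool)) (x : α × Bool) :
    invRev (u ++ [x]) = inv1 x :: invRev u := by
  simp [invRev, inv1]

lemma length_invRev (u : List (α × Bool)) : (invRev u).length = u.length := by
  simp [invRev]

lemma getElem_invRev (u : List (α × Bool)) (p : ℕ) (hp : p < u.length) :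
    (invRev u)[p]'(by simpa [invRev] using hp) = inv1 (u[u.length - 1 - p]'(by omega)) := by
  simp [invRev, inv1, List.getElem_reverse]

/-- A word is reduced if no adjacent pair cancels. -/
def Reduced (w : List (α × Bool)) : Prop := List.Chain' (fun a b => b ≠ inv1 a) w

lemma Reduced.infix {w u : List (α × Bool)} (h : Reduced w) (h' : u <:+: w) : Reduced u :=
  List.IsChain.infix h h'

lemma reduced_reduce (L : List (α × Bool)) : Reduced (reduce L) := by
  induction L with
  | nil => exact List.isChain_nil
  | cons x L ih =>
    rcases h : reduce L with - | ⟨hd, tl⟩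
    · rw [reduce.cons, h]
      exact List.isChain_singleton x
    · rw [reduce.cons, h]
      rw [h] at ih
      by_cases hc : x.1 = hd.1 ∧ x.2 = !hd.2
      · simp only [if_pos hc]
        exact ih.tail
      · simp only [if_neg hc]
        rw [Reduced, List.Chain', List.isChain_cons_cons]
        refine ⟨fun he => hc ?_, ih⟩
        rw [he]; simp [inv1]
        
lemma Reduced.reduce_eq {L : List (α × Bool)} (h : Reduced L) : reduce L = L := by
  induction L with
  | nil => rfl
  | cons x L ih =>
    have hL : Reduced L := h.tail
    rw [reduce.cons, ih hL]
    cases L with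
    | nil => rfl
    | cons hd tl =>
      have hne : hd ≠ inv1 x := (List.isChain_cons_cons.1 h).1
      have hc : ¬ (x.1 = hd.1 ∧ x.2 = !hd.2) := by
        intro hc
        apply hne
        cases x with | mk a b =>
        cases hd with | mk c d =>
        simp only [inv1]
        obtain ⟨h1, h2⟩ := hc
        simp only at h1 h2
        subst h1
        rw [h2]
        simp
      simp [if_neg hc]

lemma reduced_toWord (g : FreeGroup α) : Reduced (toWord g) := by
  have := reduce_toWord g
  rw [← this]
  exact reduced_reduce _

lemma reduced_append {u v : List (α × Bool)} (hu : Reduced u) (hv : Reduced v)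
    (h : ∀ (x : α × Bool), u.getLast? = some x → ∀ y, v.head? = some y → y ≠ inv1 x) :
    Reduced (u ++ v) := by
  rw [Reduced, List.Chain', List.isChain_append]
  exact ⟨hu, hv, h⟩

theorem cancel_lemma (u : List (α × Bool)) :
    ∀ v : List (α × Bool), Reduced u → Reduced v →
    ∃ p q r, u = p ++ r ∧ v = invRev r ++ q ∧ reduce (u ++ v) = p ++ q := by
  induction u using List.reverseRecOn with
  | nil =>
    intro v _ hv
    exact ⟨[], v, [], by simp, by simp [invRev], by simpa using hv.reduce_eq⟩
  | append_singleton u' x ih =>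
    intro v hu hv
    rcases v with - | ⟨y, v'⟩
    · refine ⟨u' ++ [x], [], [], by simp, by simp [invRev], by simpa using hu.reduce_eq⟩
    · by_cases hy : y = inv1 x
      · subst hy
        have hu' : Reduced u' := hu.infix ⟨[], [x], by simp⟩
        have hv' : Reduced v' := hv.infix ⟨[inv1 x], [], by simp⟩
        obtain ⟨p, q, r, h1, h2, h3⟩ := ih v' hu' hv'
        refine ⟨p, q, r ++ [x], by rw [h1]; simp, ?_, ?_⟩
        · rw [invRev_concat, h2]; simp
        · have hstep : Red.Step ((u' ++ [x]) ++ inv1 x :: v') (u' ++ v') := by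
            have : (u' ++ [x]) ++ inv1 x :: v' = u' ++ (x.1, x.2) :: (x.1, !x.2) :: v' := by
              simp [inv1]
            rw [this]
            exact Red.Step.not
          rw [reduce.Step.eq hstep, h3]
      · -- no cancellation at the junction
        have hred : Reduced ((u' ++ [x]) ++ y :: v') := by
          apply reduced_append hu hv
          · intro a ha b hb
            simp at ha hb
            subst ha; subst hb; exact hy
        exact ⟨u' ++ [x], y :: v', [], by simp, by simp [invRev], by rw [hred.reduce_eq]⟩


section Count
variable {β : Type*}
/-- window of length `E` starting at `i` -/
def window (E : ℕ) (w : List β) (i : ℕ) : List β := (w.drop i).take E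

lemma length_window {E : ℕ} {w : List β} {i : ℕ} (h : i + E ≤ w.length) :
    (window E w i).length = E := by
  simp [window]; omega

lemma getElem_window {E : ℕ} {w : List β} {i : ℕ} (h : i + E ≤ w.length)
    (t : ℕ) (ht : t < E) :
    (window E w i)[t]'(by rw [length_window h]; exact ht) = w[i + t]'(by omega) := by
  simp [window, List.getElem_take, List.getElem_drop]

noncomputable def occSet (S : List β → Prop) (E : ℕ) (w : List β) : Finset ℕ :=
  (Finset.range (w.length + 1)).filter (fun i => i + E ≤ w.length ∧ S (window E w i))

noncomputable def cnt (S : List β → Prop) (E : ℕ) (w : List β) : ℕ := (occSet S E w).card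

lemma mem_occSet {S : List β → Prop} {E : ℕ} {w : List β} {i : ℕ} :
    i ∈ occSet S E w ↔ i + E ≤ w.length ∧ S (window E w i) := by
  unfold occSet
  simp only [Finset.mem_filter, Finset.mem_range]
  constructor
  · tauto
  · intro h; exact ⟨by omega, h⟩

lemma window_append_left {E : ℕ} {u v : List β} {i : ℕ} (h : i + E ≤ u.length) :
    window E (u ++ v) i = window E u i := by
  unfold window
  rw [List.drop_append, List.take_append]
  have h1 : i - u.length = 0 := by omega
  have h2 : E - (u.drop i).length = 0 := by simp; omega
  rw [h1, h2]
  simp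

lemma window_append_right {E : ℕ} (u v : List β) (j : ℕ) :
    window E (u ++ v) (u.length + j) = window E v j := by
  unfold window
  congr 1
  rw [List.drop_append]
  have h1 : u.length + j - u.length = j := by omega
  rw [h1]
  have : u.drop (u.length + j) = [] := by
    apply List.drop_eq_nil_of_le; omega
  simp [this]

lemma cnt_append_le {S : List β → Prop} {E : ℕ} (hE : 1 ≤ E) (u v : List β) :
    cnt S E (u ++ v) ≤ cnt S E u + cnt S E v + (E - 1) := by
  have hsub : occSet S E (u ++ v) ⊆
      (occSet S E u ∪ (occSet S E v).image (fun j => u.length + j)) ∪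
        Finset.Ico (u.length + 1 - E) u.length := by
    intro i hi
    rw [mem_occSet] at hi
    obtain ⟨hile, hSi⟩ := hi
    rw [List.length_append] at hile
    rcases le_or_gt (i + E) u.length with hc | hc
    · apply Finset.mem_union_left; apply Finset.mem_union_left
      rw [mem_occSet]
      rw [window_append_left hc] at hSi
      exact ⟨hc, hSi⟩
    · rcases le_or_gt u.length i with hc2 | hc2
      · apply Finset.mem_union_left; apply Finset.mem_union_right
        rw [Finset.mem_image]
        refine ⟨i - u.length, ?_, by omega⟩
        rw [mem_occSet]
        have heq : i = u.length + (i - u.length) := by omega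
        rw [heq, window_append_right] at hSi
        exact ⟨by omega, hSi⟩
      · apply Finset.mem_union_right
        rw [Finset.mem_Ico]
        omega
  calc cnt S E (u ++ v) ≤ ((occSet S E u ∪ (occSet S E v).image (fun j => u.length + j)) ∪
        Finset.Ico (u.length + 1 - E) u.length).card := Finset.card_le_card hsub
    _ ≤ (occSet S E u ∪ (occSet S E v).image (fun j => u.length + j)).card
        + (Finset.Ico (u.length + 1 - E) u.length).card := Finset.card_union_le _ _
    _ ≤ (occSet S E u).card + ((occSet S E v).image (fun j => u.length + j)).card
        + (Finset.Ico (u.length + 1 - E) u.length).card :=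
        Nat.add_le_add_right (Finset.card_union_le _ _) _
    _ ≤ cnt S E u + cnt S E v + (E - 1) := by
        unfold cnt
        have h1 : ((occSet S E v).image (fun j => u.length + j)).card ≤ (occSet S E v).card :=
          Finset.card_image_le
        have h2 : (Finset.Ico (u.length + 1 - E) u.length).card ≤ E - 1 := by
          rw [Nat.card_Ico]; omega
        omega

lemma le_cnt_append {S : List β → Prop} {E : ℕ} (hE : 1 ≤ E) (u v : List β) :
    cnt S E u + cnt S E v ≤ cnt S E (u ++ v) := by
  have hdisj : Disjoint (occSet S E u) ((occSet S E v).image (fun j => u.length + j)) := by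
    rw [Finset.disjoint_left]
    intro i hi hi'
    rw [mem_occSet] at hi
    rw [Finset.mem_image] at hi'
    obtain ⟨j, _, hj⟩ := hi'
    omega
  have hsub : occSet S E u ∪ (occSet S E v).image (fun j => u.length + j)
      ⊆ occSet S E (u ++ v) := by
    intro i hi
    rw [Finset.mem_union] at hi
    rcases hi with hi | hi
    · rw [mem_occSet] at hi
      rw [mem_occSet, window_append_left hi.1]
      refine ⟨by rw [List.length_append]; omega, hi.2⟩
    · rw [Finset.mem_image] at hi
      obtain ⟨j, hj, rfl⟩ := hi
      rw [mem_occSet] at hj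
      rw [mem_occSet, window_append_right]
      refine ⟨by rw [List.length_append]; omega, hj.2⟩
  have hinj : Function.Injective (fun j => u.length + j) := fun a b h => by
    simpa using h
  calc cnt S E u + cnt S E v
      = (occSet S E u).card + ((occSet S E v).image (fun j => u.length + j)).card := by
        unfold cnt
        rw [Finset.card_image_of_injective _ hinj]
    _ = (occSet S E u ∪ (occSet S E v).image (fun j => u.length + j)).card := by
        rw [Finset.card_union_of_disjoint hdisj]
    _ ≤ cnt S E (u ++ v) := Finset.card_le_card hsub


end Count
lemma window_invRev {E : ℕ} (hE : 1 ≤ E) {w : List (α × Bool)} {i : ℕ} (h : i + E ≤ w.length) :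
    window E (invRev w) (w.length - E - i) = invRev (window E w i) := by
  have hlw : (window E w i).length = E := length_window h
  have hlen1 : (window E (invRev w) (w.length - E - i)).length = E := by
    apply length_window
    rw [length_invRev]
    omega
  apply List.ext_getElem
  · rw [hlen1, length_invRev, hlw]
  · intro t ht1 ht2
    rw [hlen1] at ht1
    have e1 : (window E (invRev w) (w.length - E - i))[t]'(by rw [hlen1]; exact ht1)
        = (invRev w)[(w.length - E - i) + t]'(by rw [length_invRev]; omega) :=
      getElem_window (by rw [length_invRev]; omega) t ht1
    rw [e1, getElem_invRev _ _ (by omega)]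
    have e2 : (invRev (window E w i))[t]'ht2
        = inv1 ((window E w i)[(window E w i).length - 1 - t]'(by omega)) := by
      apply getElem_invRev
      rw [length_invRev] at ht2; omega
    rw [e2]
    congr 1
    have e3 : (window E w i)[(window E w i).length - 1 - t]'(by omega)
        = (window E w i)[E - 1 - t]'(by rw [hlw]; omega) := by
      congr 1
      rw [hlw]
    rw [e3, getElem_window h _ (by omega)]
    congr 1
    omega

lemma cnt_invRev {E : ℕ} (hE : 1 ≤ E) (S : List (α × Bool) → Prop) (w : List (α × Bool)) :
    cnt S E (invRev w) = cnt (fun s => S (invRev s)) E w := by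
  unfold cnt
  apply Eq.symm
  apply Finset.card_bij' (fun i _ => w.length - E - i) (fun j _ => w.length - E - j)
  · intro i hi
    rw [mem_occSet] at hi ⊢
    obtain ⟨h1, h2⟩ := hi
    constructor
    · rw [length_invRev]; omega
    · rw [window_invRev hE h1]; exact h2
  · intro j hj
    rw [mem_occSet] at hj ⊢
    obtain ⟨h1, h2⟩ := hj
    rw [length_invRev] at h1
    constructor
    · omega
    · have : window E (invRev w) j = invRev (window E w (w.length - E - j)) := by
        have := window_invRev hE (w := w) (i := w.length - E - j) (by omega)
        rwa [show w.length - E - (w.length - E - j) = j by omega] at this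
      rw [← this]; exact h2
  · intro i hi
    rw [mem_occSet] at hi
    omega
  · intro j hj
    rw [mem_occSet] at hj
    rw [length_invRev] at hj
    omega



end Words

section Quasi
variable {α : Type*} [DecidableEq α] (S : List (α × Bool) → Prop) (E : ℕ)

noncomputable def Hq (g : FreeGroup α) : ℤ :=
  (cnt S E g.toWord : ℤ) - (cnt (fun s => S (invRev s)) E g.toWord : ℤ)

lemma toWord_mul' (a b : FreeGroup α) :
    (a * b).toWord = reduce (a.toWord ++ b.toWord) := by
  have h : a * b = FreeGroup.mk (a.toWord ++ b.toWord) := by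
    rw [← mul_mk, mk_toWord, mk_toWord]
  rw [h, toWord_mk]

lemma cnt_invRev_invRev (w : List (α × Bool)) (hE : 1 ≤ E) :
    cnt (fun s => S (invRev (invRev s))) E w = cnt S E w := by
  have : (fun s : List (α × Bool) => S (invRev (invRev s))) = S := by
    funext s; rw [invRev_invRev]
  rw [this]

lemma Hq_inv (hE : 1 ≤ E) (g : FreeGroup α) : Hq S E g⁻¹ = - Hq S E g := by
  unfold Hq
  rw [toWord_inv, cnt_invRev hE, cnt_invRev hE, cnt_invRev_invRev _ _ _ hE]
  ring

lemma Hq_one (hE : 1 ≤ E) : Hq S E (1 : FreeGroup α) = 0 := by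
  have h : ∀ T : List (α × Bool) → Prop, cnt T E ([] : List (α × Bool)) = 0 := by
    intro T
    unfold cnt
    rw [Finset.card_eq_zero]
    ext i
    rw [mem_occSet]
    simp
    intro h'
    omega
  unfold Hq
  rw [toWord_one, h, h]
  rfl

lemma Hq_mul (hE : 1 ≤ E) (a b : FreeGroup α) :
    |Hq S E (a * b) - Hq S E a - Hq S E b| ≤ 3 * ((E : ℤ) - 1) := by
  obtain ⟨p, q, r, h1, h2, h3⟩ :=
    cancel_lemma a.toWord b.toWord (reduced_toWord a) (reduced_toWord b)
  have hab : (a * b).toWord = p ++ q := by rw [toWord_mul', h3]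
  unfold Hq
  rw [hab, h1, h2]
  set T := fun s : List (α × Bool) => S (invRev s) with hT
  have e1 : cnt S E (invRev r) = cnt T E r := cnt_invRev hE S r
  have e2 : cnt T E (invRev r) = cnt S E r := by
    rw [cnt_invRev hE T r, hT, cnt_invRev_invRev _ _ _ hE]
  have hS1a := le_cnt_append (S := S) hE p q
  have hS1b := cnt_append_le (S := S) hE p q
  have hS2a := le_cnt_append (S := S) hE p r
  have hS2b := cnt_append_le (S := S) hE p r
  have hS3a := le_cnt_append (S := S) hE (invRev r) q
  have hS3b := cnt_append_le (S := S) hE (invRev r) q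
  have hT1a := le_cnt_append (S := T) hE p q
  have hT1b := cnt_append_le (S := T) hE p q
  have hT2a := le_cnt_append (S := T) hE p r
  have hT2b := cnt_append_le (S := T) hE p r
  have hT3a := le_cnt_append (S := T) hE (invRev r) q
  have hT3b := cnt_append_le (S := T) hE (invRev r) q
  rw [abs_le]
  constructor <;> push_cast <;> omega

lemma Hq_comm (hE : 1 ≤ E) (x y : FreeGroup α) :
    |Hq S E ⁅x, y⁆| ≤ 9 * ((E : ℤ) - 1) := by
  have hc : ⁅x, y⁆ = (x * y) * (x⁻¹ * y⁻¹) := by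
    rw [commutatorElement_def]
    group
  have h1 := Hq_mul S E hE (x * y) (x⁻¹ * y⁻¹)
  have h2 := Hq_mul S E hE x y
  have h3 := Hq_mul S E hE x⁻¹ y⁻¹
  have h4 := Hq_inv S E hE x
  have h5 := Hq_inv S E hE y
  rw [abs_le] at h1 h2 h3 ⊢
  rw [hc]
  omega

lemma Hq_prod (hE : 1 ≤ E) (l : List (FreeGroup α))
    (hl : ∀ c ∈ l, ∃ a b : FreeGroup α, c = ⁅a, b⁆) :
    |Hq S E l.prod| ≤ 12 * ((E : ℤ) - 1) * l.length := by
  induction l with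
  | nil =>
    simp [Hq_one S E hE]
  | cons c t ih =>
    have hc := hl c (List.mem_cons_self)
    obtain ⟨a, b, rfl⟩ := hc
    have h1 := Hq_mul S E hE ⁅a, b⁆ t.prod
    have h2 := Hq_comm S E hE a b
    have h3 := ih (fun c hc => hl c (List.mem_cons_of_mem _ hc))
    rw [List.prod_cons]
    rw [abs_le] at h1 h2 h3 ⊢
    have hEpos : (0 : ℤ) ≤ (E : ℤ) - 1 := by
      have : (1 : ℤ) ≤ (E : ℤ) := by exact_mod_cast hE
      omega
    have hlen : (((⁅a, b⁆ :: t).length : ℤ)) = (t.length : ℤ) + 1 := by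
      simp
    rw [hlen]
    constructor <;> nlinarith [h1.1, h1.2, h2.1, h2.2, h3.1, h3.2]

lemma Hq_conj (hE : 1 ≤ E) (w t : FreeGroup α) :
    Hq S E t - 6 * ((E : ℤ) - 1) ≤ Hq S E (w * t * w⁻¹) := by
  have h1 := Hq_mul S E hE w t
  have h2 := Hq_mul S E hE (w * t) w⁻¹
  have h3 := Hq_inv S E hE w
  rw [abs_le] at h1 h2
  omega

end Quasi

section Cyclic
variable {α : Type*} [DecidableEq α]

/-- the bi-infinite periodic word associated to `A` -/
def fw (A : List (α × Bool)) (hl : 0 < A.length) (p : ℕ) : α × Bool :=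
  A[p % A.length]'(Nat.mod_lt _ hl)

lemma fw_congr (A : List (α × Bool)) (hl : 0 < A.length) {p q : ℕ}
    (h : p % A.length = q % A.length) : fw A hl p = fw A hl q := by
  unfold fw
  congr 1

lemma keyZ (l E i j : ℕ) (hl : 0 < l) (hE : E = l / 2 + 1) :
    ∃ t, t < E ∧ ((j + (E - 1 - t)) % l = (i + t) % l ∨
      (j + (E - 1 - t)) % l = (i + t + 1) % l) := by
  set d : ℤ := (j : ℤ) + (E : ℤ) - 1 - (i : ℤ) with hd
  have h0 : (0 : ℤ) < (l : ℤ) := by exact_mod_cast hl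
  have hr0 : 0 ≤ d % (l : ℤ) := Int.emod_nonneg d (by omega)
  have hrl : d % (l : ℤ) < (l : ℤ) := Int.emod_lt_of_pos d h0
  have hdiv : (l : ℤ) * (d / (l : ℤ)) + d % (l : ℤ) = d := Int.mul_ediv_add_emod d l
  set r : ℕ := (d % (l : ℤ)).toNat with hrdef
  have hreq : (r : ℤ) = d % (l : ℤ) := Int.toNat_of_nonneg hr0
  have hrlt : r < l := by omega
  refine ⟨r / 2, by omega, ?_⟩
  set t := r / 2 with htdef
  have htE : t ≤ E - 1 := by omega
  set K : ℤ := (l : ℤ) * (d / (l : ℤ)) with hK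
  have hdK : d = K + r := by omega
  rcases Nat.even_or_odd r with he | ho
  · left
    obtain ⟨c, hc⟩ := he
    have hr2t : r = 2 * t := by omega
    have hdvd : ((l : ℤ)) ∣ ((i + t : ℕ) : ℤ) - ((j + (E - 1 - t) : ℕ) : ℤ) := by
      refine ⟨-(d / (l : ℤ)), ?_⟩
      have hc1 : ((E - 1 - t : ℕ) : ℤ) = (E : ℤ) - 1 - (t : ℤ) := by omega
      push_cast
      rw [hc1]
      have : (l : ℤ) * -(d / (l : ℤ)) = -K := by rw [hK]; ring
      rw [this]
      omega
    have := (Nat.modEq_iff_dvd (n := l) (a := j + (E - 1 - t)) (b := i + t)).2 hdvd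
    exact this
  · right
    obtain ⟨c, hc⟩ := ho
    have hr2t : r = 2 * t + 1 := by omega
    have hdvd : ((l : ℤ)) ∣ ((i + t + 1 : ℕ) : ℤ) - ((j + (E - 1 - t) : ℕ) : ℤ) := by
      refine ⟨-(d / (l : ℤ)), ?_⟩
      have hc1 : ((E - 1 - t : ℕ) : ℤ) = (E : ℤ) - 1 - (t : ℤ) := by omega
      push_cast
      rw [hc1]
      have : (l : ℤ) * -(d / (l : ℤ)) = -K := by rw [hK]; ring
      rw [this]
      omega
    exact (Nat.modEq_iff_dvd (n := l) (a := j + (E - 1 - t)) (b := i + t + 1)).2 hdvd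

lemma no_both (A : List (α × Bool)) (hl : 0 < A.length)
    (hcyc : ∀ p : ℕ, fw A hl (p + 1) ≠ inv1 (fw A hl p))
    (E : ℕ) (hE : E = A.length / 2 + 1) (s : List (α × Bool)) (hs : s.length = E)
    (i : ℕ) (hi : ∀ t (ht : t < E), s[t]'(by omega) = fw A hl (i + t))
    (j : ℕ) (hj : ∀ t (ht : t < E),
      (invRev s)[t]'(by rw [length_invRev, hs]; exact ht) = fw A hl (j + t)) : False := by
  have key : ∀ t, t < E → fw A hl (j + (E - 1 - t)) = inv1 (fw A hl (i + t)) := by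
    intro t ht
    have h1 := hj (E - 1 - t) (by omega)
    rw [getElem_invRev _ _ (by omega)] at h1
    simp only [show s.length - 1 - (E - 1 - t) = t from by omega] at h1
    rw [hi t ht] at h1
    exact h1.symm
  obtain ⟨t, ht, hcase⟩ := keyZ A.length E i j hl hE
  rcases hcase with h | h
  · have hcon := fw_congr A hl h
    have hk := key t ht
    rw [hcon] at hk
    exact inv1_ne _ hk.symm
  · have hcon := fw_congr A hl h
    have hk := key t ht
    rw [hcon] at hk
    exact hcyc (i + t) hk

/-- `n`-fold concatenation -/
def An (A : List (α × Bool)) : ℕ → List (α × Bool)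
  | 0 => []
  | n + 1 => A ++ An A n

@[simp] lemma An_zero (A : List (α × Bool)) : An A 0 = [] := rfl
@[simp] lemma An_succ (A : List (α × Bool)) (n : ℕ) : An A (n + 1) = A ++ An A n := rfl

@[simp] lemma length_An (A : List (α × Bool)) (n : ℕ) :
    (An A n).length = n * A.length := by
  induction n with
  | zero => simp
  | succ n ih => simp [ih]; ring

lemma getElem_An (A : List (α × Bool)) (hl : 0 < A.length) (n p : ℕ)
    (hp : p < n * A.length) :
    (An A n)[p]'(by rw [length_An]; exact hp) = fw A hl p := by
  induction n generalizing p with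
  | zero => omega
  | succ n ih =>
    have hsm : (n + 1) * A.length = n * A.length + A.length := by ring
    rcases lt_or_ge p A.length with hc | hc
    · simp only [An_succ]
      rw [List.getElem_append_left (by omega)]
      unfold fw
      congr 1
      exact (Nat.mod_eq_of_lt hc).symm
    · have hplt : p - A.length < n * A.length := by omega
      simp only [An_succ]
      rw [List.getElem_append_right (by omega)]
      rw [ih (p - A.length) hplt]
      apply fw_congr
      conv_rhs => rw [show p = (p - A.length) + 1 * A.length by omega]
      rw [Nat.add_mul_mod_self_right]

lemma reduced_An (A : List (α × Bool)) (hl : 0 < A.length)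
    (hcyc : ∀ p : ℕ, fw A hl (p + 1) ≠ inv1 (fw A hl p)) (n : ℕ) :
    Reduced (An A n) := by
  rw [Reduced, List.Chain', List.isChain_iff_getElem]
  intro p hp
  rw [length_An] at hp
  rw [getElem_An A hl n p (by omega), getElem_An A hl n (p + 1) (by omega)]
  exact hcyc p

lemma mk_An (A : List (α × Bool)) (n : ℕ) :
    FreeGroup.mk (An A n) = (FreeGroup.mk A) ^ n := by
  induction n with
  | zero => rw [pow_zero, An_zero, FreeGroup.one_eq_mk]
  | succ n ih => rw [An_succ, ← mul_mk, ih, ← pow_succ']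

lemma toWord_mk_An (A : List (α × Bool)) (hl : 0 < A.length)
    (hcyc : ∀ p : ℕ, fw A hl (p + 1) ≠ inv1 (fw A hl p)) (n : ℕ) :
    ((FreeGroup.mk A) ^ n).toWord = An A n := by
  rw [← mk_An, toWord_mk, (reduced_An A hl hcyc n).reduce_eq]

/-- positive window predicate -/
def SposA (A : List (α × Bool)) (hl : 0 < A.length) (E : ℕ) (s : List (α × Bool)) : Prop :=
  s.length = E ∧ ∃ i : ℕ, ∀ t (ht : t < s.length), s[t]'ht = fw A hl (i + t)

lemma cnt_pos_An (A : List (α × Bool)) (hl : 0 < A.length) (E : ℕ) (hEl : E ≤ A.length)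
    (n : ℕ) (hn : 1 ≤ n) :
    n * A.length + 1 - E ≤ cnt (SposA A hl E) E (An A n) := by
  have hNl : A.length ≤ n * A.length := Nat.le_mul_of_pos_left A.length hn
  have hsub : Finset.range (n * A.length + 1 - E) ⊆ occSet (SposA A hl E) E (An A n) := by
    intro i hi
    rw [Finset.mem_range] at hi
    rw [mem_occSet, length_An]
    have hiE : i + E ≤ n * A.length := by omega
    refine ⟨hiE, length_window (by rw [length_An]; exact hiE), i, ?_⟩
    intro t ht
    rw [length_window (by rw [length_An]; exact hiE)] at ht
    rw [getElem_window (by rw [length_An]; exact hiE) t ht]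
    exact getElem_An A hl n (i + t) (by omega)
  calc n * A.length + 1 - E = (Finset.range (n * A.length + 1 - E)).card := by
        rw [Finset.card_range]
    _ ≤ _ := Finset.card_le_card hsub

lemma cnt_neg_An (A : List (α × Bool)) (hl : 0 < A.length)
    (hcyc : ∀ p : ℕ, fw A hl (p + 1) ≠ inv1 (fw A hl p))
    (E : ℕ) (hE : E = A.length / 2 + 1) (n : ℕ) :
    cnt (fun s => SposA A hl E (invRev s)) E (An A n) = 0 := by
  unfold cnt
  rw [Finset.card_eq_zero]
  ext i
  simp only [Finset.notMem_empty, iff_false]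
  intro hi
  rw [mem_occSet] at hi
  obtain ⟨hiE, hlen, j, hj⟩ := hi
  rw [length_An] at hiE
  set s := window E (An A n) i with hsdef
  have hs : s.length = E := length_window (by rw [length_An]; exact hiE)
  apply no_both A hl hcyc E hE s hs i ?_ j ?_
  · intro t ht
    simp only [hsdef]
    rw [getElem_window (by rw [length_An]; exact hiE) t ht]
    exact getElem_An A hl n (i + t) (by omega)
  · intro t ht
    have := hj t (by rw [length_invRev, hs]; exact ht)
    exact this

end Cyclic

section Exist
variable {α : Type*} [DecidableEq α]

lemma fnc_of_reduced (A : List (α × Bool)) (hred : Reduced A) (hl : 0 < A.length)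
    (hjunc : A[0]'hl ≠ inv1 (A[A.length - 1]'(by omega))) :
    ∀ p : ℕ, fw A hl (p + 1) ≠ inv1 (fw A hl p) := by
  intro p
  have hk : p % A.length < A.length := Nat.mod_lt _ hl
  have hfwp : fw A hl p = A[p % A.length]'hk := rfl
  rcases lt_or_ge (p % A.length + 1) A.length with hc | hc
  · have h1 : 1 % A.length = 1 := Nat.mod_eq_of_lt (by omega)
    have hmod : (p + 1) % A.length = p % A.length + 1 := by
      rw [Nat.add_mod, h1]
      exact Nat.mod_eq_of_lt hc
    have hfw1 : fw A hl (p + 1) = A[p % A.length + 1]'hc := by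
      unfold fw
      congr 1
    rw [hfw1, hfwp]
    have := List.isChain_iff_getElem.1 hred (p % A.length) (by omega)
    simpa using this
  · have hpl : p % A.length = A.length - 1 := by omega
    have hmod : (p + 1) % A.length = 0 := by
      rw [Nat.add_mod, hpl]
      rcases Nat.eq_or_lt_of_le hl with h2 | h2
      · simp [← h2]
      · have h1 : 1 % A.length = 1 := Nat.mod_eq_of_lt h2
        rw [h1, show A.length - 1 + 1 = A.length by omega]
        simp
    have hfw1 : fw A hl (p + 1) = A[0]'hl := by
      unfold fw
      congr 1
    rw [hfw1, hfwp]
    simp only [hpl]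
    exact hjunc

lemma mk_cons_cancel (y : α × Bool) :
    FreeGroup.mk [inv1 y] * FreeGroup.mk [y] = 1 := by
  rw [mul_mk]
  have hstep : Red.Step ([inv1 y] ++ [y]) [] := by
    have h : ([inv1 y] ++ [y] : List (α × Bool))
        = ([] : List (α × Bool)) ++ (y.1, !y.2) :: (y.1, !(!y.2)) :: [] := by
      simp [inv1]
    rw [h]
    exact Red.Step.not
  have : FreeGroup.mk ([inv1 y] ++ [y]) = FreeGroup.mk [] := Quot.sound hstep
  rw [this, ← FreeGroup.one_eq_mk]

theorem exists_cyc' : ∀ (N : ℕ) (g : FreeGroup α), (toWord g).length ≤ N → g ≠ 1 →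
    ∃ (u : FreeGroup α) (A : List (α × Bool)) (hl : 0 < A.length),
      g = u * FreeGroup.mk A * u⁻¹ ∧ Reduced A ∧
      A[0]'hl ≠ inv1 (A[A.length - 1]'(by omega)) := by
  intro N
  induction N with
  | zero =>
    intro g hN hg
    exfalso
    apply hg
    rw [← toWord_eq_nil_iff]
    exact List.length_eq_zero_iff.1 (by omega)
  | succ N ih =>
    intro g hN hg
    have hw : Reduced (toWord g) := reduced_toWord g
    rcases hdec : toWord g with - | ⟨xx, w₁⟩
    · exact absurd (toWord_eq_nil_iff.1 hdec) hg
    rcases List.eq_nil_or_concat' w₁ with rfl | ⟨m, y, rfl⟩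
    · -- single letter
      refine ⟨1, [xx], by simp, ?_, ?_, ?_⟩
      · rw [← mk_toWord (x := g), hdec]; simp
      · exact List.isChain_singleton xx
      · simpa using (inv1_ne xx).symm
    · by_cases hxy : xx = inv1 y
      · -- cancelling ends
        have hminf : m <:+: toWord g := ⟨[xx], [y], by rw [hdec]; simp⟩
        have hm_red : Reduced m := hw.infix hminf
        have htm : (FreeGroup.mk m).toWord = m := by rw [toWord_mk, hm_red.reduce_eq]
        have hgdec : g = FreeGroup.mk [xx] * FreeGroup.mk m * (FreeGroup.mk [xx])⁻¹ := by
          have h1 : FreeGroup.mk [y] = (FreeGroup.mk [xx])⁻¹ := by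
            apply eq_inv_of_mul_eq_one_right
            rw [hxy]
            exact mk_cons_cancel y
          conv_lhs => rw [← mk_toWord (x := g), hdec]
          rw [show xx :: (m ++ [y]) = ([xx] ++ m) ++ [y] by simp]
          rw [← mul_mk, ← mul_mk, h1]
        have hmne : FreeGroup.mk m ≠ 1 := by
          intro h1
          apply hg
          rw [hgdec, h1, mul_one, mul_inv_cancel]
        have hlen : (FreeGroup.mk m).toWord.length ≤ N := by
          rw [htm]
          have := congrArg List.length hdec
          simp at this
          omega
        obtain ⟨u, A, hl, hu, hred, hjunc⟩ := ih (FreeGroup.mk m) hlen hmne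
        refine ⟨FreeGroup.mk [xx] * u, A, hl, ?_, hred, hjunc⟩
        rw [hgdec, hu]
        group
      · -- junction ok
        refine ⟨1, toWord g, by rw [hdec]; simp, by simp [mk_toWord], hw, ?_⟩
        have hlen : (toWord g).length = m.length + 2 := by rw [hdec]; simp
        have h0 : (toWord g)[0]'(by omega) = xx := by
          simp only [hdec]; rfl
        have hlast : (toWord g)[(toWord g).length - 1]'(by omega) = y := by
          simp only [hdec]
          have hL : (xx :: (m ++ [y])).length - 1 = m.length + 1 := by simp
          simp only [hL, List.getElem_cons_succ]
          exact List.getElem_concat_length (l := m) (a := y) (i := m.length) rfl (by simp)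
        rw [h0, hlast]
        exact hxy

theorem key_bound (g : FreeGroup α) (hg : g ≠ 1) (n m : ℕ) (hn : 1 ≤ n)
    (x y : Fin m → FreeGroup α)
    (hprod : g ^ n = (List.ofFn fun i => ⁅x i, y i⁆).prod) : n ≤ 6 * m + 3 := by
  obtain ⟨u, A, hl, hgdec, hred, hjunc⟩ :=
    exists_cyc' (toWord g).length g le_rfl hg
  have hcyc := fnc_of_reduced A hred hl hjunc
  set l := A.length with hldef
  set E := l / 2 + 1 with hEdef
  have hE1 : 1 ≤ E := by omega
  have hEl : E ≤ l := by omega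
  set S := SposA A hl E with hSdef
  set NL := n * l with hNL
  have hlNL : l ≤ NL := by
    rw [hNL]; exact Nat.le_mul_of_pos_left l hn
  have h1 : NL + 1 - E ≤ cnt S E (An A n) := cnt_pos_An A hl E hEl n hn
  have h2 : cnt (fun s => S (invRev s)) E (An A n) = 0 := cnt_neg_An A hl hcyc E hEdef n
  have h3 : Hq S E ((FreeGroup.mk A) ^ n) = (cnt S E (An A n) : ℤ) := by
    unfold Hq
    rw [toWord_mk_An A hl hcyc n, h2]
    simp
  have hgn : g ^ n = u * (FreeGroup.mk A) ^ n * u⁻¹ := by rw [hgdec, conj_pow]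
  have h4 := Hq_conj S E hE1 u ((FreeGroup.mk A) ^ n)
  have h5 := Hq_prod S E hE1 (List.ofFn fun i => ⁅x i, y i⁆) ?_
  swap
  · intro c hc
    rw [List.mem_ofFn] at hc
    obtain ⟨i, rfl⟩ := hc
    exact ⟨x i, y i, rfl⟩
  rw [← hprod, List.length_ofFn, abs_le] at h5
  rw [← hgn, h3] at h4
  set k := l / 2 with hkdef
  have hcntz : ((NL + 1 - E : ℕ) : ℤ) ≤ (cnt S E (An A n) : ℤ) := by exact_mod_cast h1
  have hcast : ((NL + 1 - E : ℕ) : ℤ) = (NL : ℤ) + 1 - E := by omega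
  have hEk1 : ((E : ℤ) - 1) = (k : ℤ) := by
    have : E = k + 1 := by rw [hEdef, hkdef]
    omega
  rw [hEk1] at h4 h5
  have hmain : (NL : ℤ) ≤ 12 * (k : ℤ) * m + 7 * k := by
    have := h5.2
    linarith
  have hl0 : (0 : ℤ) < (l : ℤ) := by exact_mod_cast hl
  have hfin : 2 * (n : ℤ) ≤ 12 * (m : ℤ) + 7 := by
    have e1 : 2 * (NL : ℤ) = (2 * (n : ℤ)) * l := by rw [hNL]; push_cast; ring
    have e3 : (12 * (m : ℤ) + 7) * (2 * (k : ℤ)) ≤ (12 * (m : ℤ) + 7) * l := by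
      apply mul_le_mul_of_nonneg_left _ (by positivity)
      exact_mod_cast (by omega : 2 * k ≤ l)
    have e4 : (2 * (n : ℤ)) * l ≤ (12 * (m : ℤ) + 7) * l := by
      rw [← e1]
      calc 2 * (NL : ℤ) ≤ 2 * (12 * (k : ℤ) * m + 7 * k) := by linarith
      _ = (12 * (m : ℤ) + 7) * (2 * (k : ℤ)) := by ring
      _ ≤ _ := e3
    exact le_of_mul_le_mul_right e4 hl0
  have : 2 * n ≤ 12 * m + 7 := by exact_mod_cast hfin
  omega

end Exist


end SclProof




open scoped ENNReal
open scoped commutatorElement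

/-- The commutator length of `g`, valued in `ℝ≥0∞` (it is `∞` when `g` is not a
product of commutators). -/
noncomputable def commLength {G : Type*} [Group G] (g : G) : ℝ≥0∞ :=
  sInf ((fun m : ℕ => (m : ℝ≥0∞)) ''
    {m : ℕ | ∃ x y : Fin m → G, g = (List.ofFn fun i => ⁅x i, y i⁆).prod})

/-- The stable commutator length of `g`: the limit of `cl(g^n)/n`.  (When the
limit exists it coincides with the `liminf`; if no nonzero power of `g` lies in
the commutator subgroup this is `∞`.) -/
noncomputable def scl {G : Type*} [Group G] (g : G) : ℝ≥0∞ :=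
  Filter.liminf (fun n : ℕ => commLength (g ^ n) / (n : ℝ≥0∞)) Filter.atTop

theorem scl_ge_one_div_six_freeGroup
    {X : Type*} [Fintype X] (g : FreeGroup X) (hg : g ≠ 1) :
    (1 : ℝ≥0∞) / 6 ≤ scl g := by

  classical
  have hcl : ∀ n : ℕ, 1 ≤ n → ((n : ℝ≥0∞) - 3) / 6 ≤ commLength (g ^ n) := by
    intro n hn
    apply le_sInf
    rintro b ⟨m, hm, rfl⟩
    simp only [Set.mem_setOf_eq] at hm
    obtain ⟨x, y, hxy⟩ := hm
    have h := SclProof.key_bound g hg n m hn x y hxy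
    have h1 : (n : ℝ≥0∞) ≤ (m : ℝ≥0∞) * 6 + 3 := by
      calc (n : ℝ≥0∞) ≤ ((6 * m + 3 : ℕ) : ℝ≥0∞) := by exact_mod_cast h
      _ = (m : ℝ≥0∞) * 6 + 3 := by push_cast; ring
    have h2 : (n : ℝ≥0∞) - 3 ≤ (m : ℝ≥0∞) * 6 := by
      rw [tsub_le_iff_right]
      exact h1
    exact ENNReal.div_le_of_le_mul h2
  rw [scl, Filter.liminf_eq]
  apply le_of_forall_lt_imp_le_of_dense
  intro b hb
  apply le_sSup
  simp only [Set.mem_setOf_eq]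
  have hb6 : b < 1 / 6 := hb
  have hbt : b ≠ ⊤ := (lt_of_lt_of_le hb6 le_top).ne
  set β := b.toReal with hβ
  have hbofReal : b = ENNReal.ofReal β := by
    rw [hβ, ENNReal.ofReal_toReal hbt]
  have hβ6 : β < 1 / 6 := by
    have := ENNReal.toReal_strict_mono (by norm_num : (1 : ℝ≥0∞) / 6 ≠ ⊤) hb6
    convert this using 1
    norm_num [ENNReal.toReal_div]
  have hβ0 : 0 ≤ β := ENNReal.toReal_nonneg
  have hδ : 0 < 1 - 6 * β := by linarith
  obtain ⟨N, hN⟩ := exists_nat_ge (3 / (1 - 6 * β))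
  rw [Filter.eventually_atTop]
  refine ⟨N + 4, fun n hn => ?_⟩
  have hn4 : 4 ≤ n := by omega
  have hnN : (N : ℝ) ≤ n := by exact_mod_cast (by omega : N ≤ n)
  have hnR : (4 : ℝ) ≤ (n : ℝ) := by exact_mod_cast hn4
  -- real inequality
  have hreal : β ≤ ((n : ℝ) - 3) / 6 / n := by
    rw [div_div, le_div_iff₀ (by positivity)]
    have h3 : 3 / (1 - 6 * β) ≤ (n : ℝ) := le_trans hN hnN
    have h4 : 3 ≤ (n : ℝ) * (1 - 6 * β) := by
      rw [div_le_iff₀ hδ] at h3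
      linarith
    nlinarith
  have heq : ((n : ℝ≥0∞) - 3) / 6 / (n : ℝ≥0∞) = ENNReal.ofReal (((n : ℝ) - 3) / 6 / n) := by
    have h3e : (3 : ℝ≥0∞) = ENNReal.ofReal (3 : ℝ) := by norm_num
    have h6e : (6 : ℝ≥0∞) = ENNReal.ofReal (6 : ℝ) := by norm_num
    have hne : (n : ℝ≥0∞) = ENNReal.ofReal (n : ℝ) := (ENNReal.ofReal_natCast n).symm
    rw [hne, h3e, h6e, ← ENNReal.ofReal_sub _ (by norm_num : (0:ℝ) ≤ 3),
      ← ENNReal.ofReal_div_of_pos (by norm_num : (0:ℝ) < 6),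
      ← ENNReal.ofReal_div_of_pos (by positivity : (0:ℝ) < (n:ℝ))]
  calc b = ENNReal.ofReal β := hbofReal
    _ ≤ ENNReal.ofReal (((n : ℝ) - 3) / 6 / n) := ENNReal.ofReal_le_ofReal hreal
    _ = ((n : ℝ≥0∞) - 3) / 6 / (n : ℝ≥0∞) := heq.symm
    _ ≤ commLength (g ^ n) / (n : ℝ≥0∞) :=
        ENNReal.div_le_div_right (hcl n (by omega)) _
end

section
/- Let F be a free group on a finite set, and let g be a non-trivial element of F. If n ≥ 1 and g^n is a product of m commutators in F, then m ≥ n/6 + 1/2. -/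
open scoped commutatorElement

namespace MWPL


/-- A periodic family of knots: strictly increasing `e : ℤ → ℝ` with `e (i + r) = e i + 1`. -/
structure Knots (e : ℤ → ℝ) (r : ℤ) : Prop where
  pos : 0 < r
  lt : ∀ i, e i < e (i + 1)
  per : ∀ i, e (i + r) = e i + 1

namespace Knots

theorem strictMono {e : ℤ → ℝ} {r : ℤ} (he : Knots e r) : StrictMono e :=
  strictMono_int_of_lt_succ he.lt

theorem per_mul {e : ℤ → ℝ} {r : ℤ} (he : Knots e r) :
    ∀ (k : ℤ) (i : ℤ), e (i + k * r) = e i + k := by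
  intro k
  induction k using Int.induction_on with
  | zero => simp
  | succ k ih =>
      intro i
      have h0 : i + (k + 1 : ℤ) * r = (i + k * r) + r := by ring
      rw [h0, he.per, ih]
      push_cast; ring
  | pred k ih =>
      intro i
      have h1 : (i + (-(k:ℤ) - 1) * r) + r = i + (-(k:ℤ)) * r := by ring
      have h2 := he.per (i + (-(k:ℤ) - 1) * r)
      rw [h1] at h2
      have h3 := ih i
      rw [h2] at h3
      push_cast
      push_cast at h3
      linarith

theorem exists_idx {e : ℤ → ℝ} {r : ℤ} (he : Knots e r) (y : ℝ) :
    ∃ i, e i ≤ y ∧ y < e (i + 1) := by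
  have hnonempty : ∃ i, e i ≤ y := by
    refine ⟨⌊y - e 0⌋ * r, ?_⟩
    have h0 := he.per_mul ⌊y - e 0⌋ 0
    simp only [zero_add] at h0
    rw [h0]
    have := Int.floor_le (y - e 0)
    linarith
  have hbdd : ∃ b, ∀ i, e i ≤ y → i ≤ b := by
    refine ⟨(⌈y - e 0⌉ + 1) * r, ?_⟩
    intro i hi
    by_contra hlt
    push_neg at hlt
    have hmono := he.strictMono hlt
    have h0 := he.per_mul (⌈y - e 0⌉ + 1) 0
    simp only [zero_add] at h0
    rw [h0] at hmono
    have := Int.le_ceil (y - e 0)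
    push_cast at hmono
    linarith
  obtain ⟨i, hi, hgr⟩ := Int.exists_greatest_of_bdd (P := fun i => e i ≤ y)
    (by obtain ⟨b, hb⟩ := hbdd; exact ⟨b, hb⟩) hnonempty
  refine ⟨i, hi, ?_⟩
  by_contra hy
  push_neg at hy
  have := hgr (i + 1) hy
  omega

/-- The index of the interval containing `y`. -/
noncomputable def idx {e : ℤ → ℝ} {r : ℤ} (he : Knots e r) (y : ℝ) : ℤ :=
  (he.exists_idx y).choose

theorem idx_spec {e : ℤ → ℝ} {r : ℤ} (he : Knots e r) (y : ℝ) :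
    e (he.idx y) ≤ y ∧ y < e (he.idx y + 1) :=
  (he.exists_idx y).choose_spec

theorem idx_unique {e : ℤ → ℝ} {r : ℤ} (he : Knots e r) {y : ℝ} {i : ℤ}
    (h1 : e i ≤ y) (h2 : y < e (i + 1)) : he.idx y = i := by
  obtain ⟨h3, h4⟩ := he.idx_spec y
  rcases lt_trichotomy (he.idx y) i with h | h | h
  · exfalso
    have h5 : he.idx y + 1 ≤ i := by omega
    have := he.strictMono.monotone h5
    linarith
  · exact h
  · exfalso
    have h5 : i + 1 ≤ he.idx y := by omega
    have := he.strictMono.monotone h5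
    linarith

end Knots

/-- Piecewise linear interpolation through the knots `(e i, v i)`. -/
noncomputable def pl {e : ℤ → ℝ} {r : ℤ} (he : Knots e r) (v : ℤ → ℝ) (y : ℝ) : ℝ :=
  v (he.idx y) + (y - e (he.idx y)) * (v (he.idx y + 1) - v (he.idx y)) /
    (e (he.idx y + 1) - e (he.idx y))

theorem pl_knot {e v : ℤ → ℝ} {r : ℤ} (he : Knots e r) (i : ℤ) :
    pl he v (e i) = v i := by
  have h : he.idx (e i) = i := he.idx_unique le_rfl (he.lt i)
  simp [pl, h]

theorem pl_mono {e v : ℤ → ℝ} {r : ℤ} (he : Knots e r) (hv : Knots v r) :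
    Monotone (pl he v) := by
  intro y z hyz
  set i := he.idx y with hi
  set j := he.idx z with hj
  obtain ⟨hy1, hy2⟩ := he.idx_spec y
  obtain ⟨hz1, hz2⟩ := he.idx_spec z
  rw [← hi] at hy1 hy2
  rw [← hj] at hz1 hz2
  have hde : (0:ℝ) < e (i + 1) - e i := by have := he.lt i; linarith
  have hdv : (0:ℝ) < v (i + 1) - v i := by have := hv.lt i; linarith
  have hij : i ≤ j := by
    by_contra hlt
    push_neg at hlt
    have h5 : j + 1 ≤ i := by omega
    have := he.strictMono.monotone h5
    linarith
  rcases eq_or_lt_of_le hij with h | h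
  · -- same piece
    simp only [pl, ← hi, ← hj, ← h]
    have hle : y - e i ≤ z - e i := by linarith
    have hslope : (0:ℝ) ≤ (v (i + 1) - v i) / (e (i + 1) - e i) :=
      le_of_lt (div_pos hdv hde)
    calc v i + (y - e i) * (v (i + 1) - v i) / (e (i + 1) - e i)
        = v i + (y - e i) * ((v (i + 1) - v i) / (e (i + 1) - e i)) := by ring
      _ ≤ v i + (z - e i) * ((v (i + 1) - v i) / (e (i + 1) - e i)) := by
          have := mul_le_mul_of_nonneg_right hle hslope
          linarith
      _ = v i + (z - e i) * (v (i + 1) - v i) / (e (i + 1) - e i) := by ring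
  · -- different pieces
    have h1 : pl he v y ≤ v (i + 1) := by
      simp only [pl, ← hi]
      have hyi : y - e i ≤ e (i + 1) - e i := by linarith
      have hslope : (0:ℝ) ≤ (v (i + 1) - v i) / (e (i + 1) - e i) :=
        le_of_lt (div_pos hdv hde)
      have hmm := mul_le_mul_of_nonneg_right hyi hslope
      have heq : (e (i + 1) - e i) * ((v (i + 1) - v i) / (e (i + 1) - e i))
          = v (i + 1) - v i := by field_simp
      calc v i + (y - e i) * (v (i + 1) - v i) / (e (i + 1) - e i)
          = v i + (y - e i) * ((v (i + 1) - v i) / (e (i + 1) - e i)) := by ring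
        _ ≤ v i + (e (i + 1) - e i) * ((v (i + 1) - v i) / (e (i + 1) - e i)) := by linarith
        _ = v (i + 1) := by rw [heq]; ring
    have h2 : v j ≤ pl he v z := by
      simp only [pl, ← hj]
      have hdej : (0:ℝ) < e (j + 1) - e j := by have := he.lt j; linarith
      have hdvj : (0:ℝ) < v (j + 1) - v j := by have := hv.lt j; linarith
      have hzj : (0:ℝ) ≤ z - e j := by linarith
      have hnn : (0:ℝ) ≤ (z - e j) * (v (j + 1) - v j) / (e (j + 1) - e j) :=
        div_nonneg (mul_nonneg hzj (le_of_lt hdvj)) (le_of_lt hdej)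
      linarith
    have h3 : v (i + 1) ≤ v j := hv.strictMono.monotone (by omega)
    linarith

theorem pl_add_one {e v : ℤ → ℝ} {r : ℤ} (he : Knots e r) (hv : Knots v r) (y : ℝ) :
    pl he v (y + 1) = pl he v y + 1 := by
  have hidx : he.idx (y + 1) = he.idx y + r := by
    apply he.idx_unique
    · rw [he.per]; have := (he.idx_spec y).1; linarith
    · have h1 : he.idx y + r + 1 = (he.idx y + 1) + r := by ring
      rw [h1, he.per]
      have := (he.idx_spec y).2; linarith
  have h1 : he.idx y + r + 1 = (he.idx y + 1) + r := by ring
  simp only [pl, hidx, h1, he.per, hv.per]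
  ring

theorem pl_left_inv {e v : ℤ → ℝ} {r : ℤ} (he : Knots e r) (hv : Knots v r) (y : ℝ) :
    pl hv e (pl he v y) = y := by
  set i := he.idx y with hi
  obtain ⟨hy1, hy2⟩ := he.idx_spec y
  rw [← hi] at hy1 hy2
  have hde : (0:ℝ) < e (i + 1) - e i := by have := he.lt i; linarith
  have hdv : (0:ℝ) < v (i + 1) - v i := by have := hv.lt i; linarith
  have key : hv.idx (pl he v y) = i := by
    apply hv.idx_unique
    · simp only [pl, ← hi]
      have hnn : (0:ℝ) ≤ (y - e i) * (v (i + 1) - v i) / (e (i + 1) - e i) :=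
        div_nonneg (mul_nonneg (by linarith) (le_of_lt hdv)) (le_of_lt hde)
      linarith
    · simp only [pl, ← hi]
      have hlt : (y - e i) * ((v (i + 1) - v i) / (e (i + 1) - e i)) <
          (e (i + 1) - e i) * ((v (i + 1) - v i) / (e (i + 1) - e i)) :=
        mul_lt_mul_of_pos_right (by linarith) (div_pos hdv hde)
      have heq : (e (i + 1) - e i) * ((v (i + 1) - v i) / (e (i + 1) - e i))
          = v (i + 1) - v i := by field_simp
      calc v i + (y - e i) * (v (i + 1) - v i) / (e (i + 1) - e i)
          = v i + (y - e i) * ((v (i + 1) - v i) / (e (i + 1) - e i)) := by ring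
        _ < v i + (e (i + 1) - e i) * ((v (i + 1) - v i) / (e (i + 1) - e i)) := by linarith
        _ = v (i + 1) := by rw [heq]; ring
  have hP : pl he v y = v i + (y - e i) * (v (i + 1) - v i) / (e (i + 1) - e i) := by
    rw [pl, ← hi]
  have houter : pl hv e (pl he v y)
      = e i + (pl he v y - v i) * (e (i + 1) - e i) / (v (i + 1) - v i) := by
    conv_lhs => rw [pl]
    rw [key]
  rw [houter, hP]
  field_simp
  ring

/-- The piecewise linear interpolation as a `CircleDeg1Lift`. -/
noncomputable def plLift {e v : ℤ → ℝ} {r : ℤ} (he : Knots e r) (hv : Knots v r) :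
    CircleDeg1Lift :=
  ⟨⟨pl he v, pl_mono he hv⟩, pl_add_one he hv⟩

@[simp] theorem plLift_apply {e v : ℤ → ℝ} {r : ℤ} (he : Knots e r) (hv : Knots v r) (y : ℝ) :
    plLift he hv y = pl he v y := rfl

/-- The piecewise linear interpolation as a unit of `CircleDeg1Lift`. -/
noncomputable def plUnit {e v : ℤ → ℝ} {r : ℤ} (he : Knots e r) (hv : Knots v r) :
    CircleDeg1Liftˣ where
  val := plLift he hv
  inv := plLift hv he
  val_inv := CircleDeg1Lift.ext fun y => by
    simp only [CircleDeg1Lift.mul_apply, plLift_apply, CircleDeg1Lift.coe_one, id_eq]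
    exact pl_left_inv hv he y
  inv_val := CircleDeg1Lift.ext fun y => by
    simp only [CircleDeg1Lift.mul_apply, plLift_apply, CircleDeg1Lift.coe_one, id_eq]
    exact pl_left_inv he hv y

@[simp] theorem plUnit_val {e v : ℤ → ℝ} {r : ℤ} (he : Knots e r) (hv : Knots v r) :
    ((plUnit he hv : CircleDeg1Liftˣ) : CircleDeg1Lift) = plLift he hv := rfl

@[simp] theorem plUnit_inv {e v : ℤ → ℝ} {r : ℤ} (he : Knots e r) (hv : Knots v r) :
    (((plUnit he hv)⁻¹ : CircleDeg1Liftˣ) : CircleDeg1Lift) = plLift hv he := rfl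

theorem plUnit_knot {e v : ℤ → ℝ} {r : ℤ} (he : Knots e r) (hv : Knots v r) (i : ℤ) :
    ((plUnit he hv : CircleDeg1Liftˣ) : CircleDeg1Lift) (e i) = v i := pl_knot he i

theorem plUnit_inv_knot {e v : ℤ → ℝ} {r : ℤ} (he : Knots e r) (hv : Knots v r) (i : ℤ) :
    (((plUnit he hv)⁻¹ : CircleDeg1Liftˣ) : CircleDeg1Lift) (v i) = e i := pl_knot hv i




open CircleDeg1Lift

local notation "τ" => CircleDeg1Lift.translationNumber

/-- The translation by an integer commutes with every `CircleDeg1Lift`. -/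
theorem commute_translate_nat (n : ℕ) (f : CircleDeg1Lift) :
    Commute ((translate (Multiplicative.ofAdd (n : ℝ)) : CircleDeg1Liftˣ) : CircleDeg1Lift) f := by
  apply CircleDeg1Lift.ext
  intro x
  simp only [CircleDeg1Lift.mul_apply]
  have h1 : ((translate (Multiplicative.ofAdd (n : ℝ)) : CircleDeg1Liftˣ) : CircleDeg1Lift) (f x)
      = (n : ℝ) + f x := translate_apply (n : ℝ) (f x)
  have h2 : ((translate (Multiplicative.ofAdd (n : ℝ)) : CircleDeg1Liftˣ) : CircleDeg1Lift) x
      = (n : ℝ) + x := translate_apply (n : ℝ) x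
  rw [h1, h2, f.map_nat_add]

theorem translationNumber_translate_mul (n : ℕ) (f : CircleDeg1Lift) :
    τ (((translate (Multiplicative.ofAdd (n : ℝ)) : CircleDeg1Liftˣ) : CircleDeg1Lift) * f)
      = n + τ f := by
  rw [translationNumber_mul_of_commute (commute_translate_nat n f),
    translationNumber_translate]

/-- Wood's lemma: the translation number of a commutator is at most 1. -/
theorem translationNumber_commutator_le_one (a b : CircleDeg1Liftˣ) :
    τ (⁅a, b⁆ : CircleDeg1Liftˣ) ≤ 1 := by
  -- first find a point where `a b y ≤ b a y + 1`
  have key : ∃ y, ((a : CircleDeg1Lift) * b) y ≤ ((b : CircleDeg1Lift) * a) y + 1 := by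
    by_contra hc
    push_neg at hc
    have hle : ((translate (Multiplicative.ofAdd ((1 : ℕ) : ℝ)) : CircleDeg1Liftˣ)
        : CircleDeg1Lift) * ((b : CircleDeg1Lift) * a) ≤ (a : CircleDeg1Lift) * b := by
      intro x
      have h2 : ((translate (Multiplicative.ofAdd ((1:ℕ) : ℝ)) : CircleDeg1Liftˣ)
          : CircleDeg1Lift) (((b : CircleDeg1Lift) * a) x)
          = ((1:ℕ) : ℝ) + ((b : CircleDeg1Lift) * a) x := translate_apply _ _
      rw [CircleDeg1Lift.mul_apply]
      rw [h2]
      push_cast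
      have := hc x
      linarith
    have hmono := translationNumber_mono hle
    rw [translationNumber_translate_mul 1 ((b : CircleDeg1Lift) * a)] at hmono
    have hconj : τ ((a : CircleDeg1Lift) * b) = τ ((b : CircleDeg1Lift) * a) := by
      have := translationNumber_conj_eq a ((b : CircleDeg1Lift) * a)
      have heq : (a : CircleDeg1Lift) * ((b : CircleDeg1Lift) * (a : CircleDeg1Lift)) *
          ((a⁻¹ : CircleDeg1Liftˣ) : CircleDeg1Lift) = (a : CircleDeg1Lift) * b := by
        have h3 : ((a : CircleDeg1Liftˣ) : CircleDeg1Lift) *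
            ((a⁻¹ : CircleDeg1Liftˣ) : CircleDeg1Lift) = 1 := by
          rw [← Units.val_mul, mul_inv_cancel, Units.val_one]
        calc (a : CircleDeg1Lift) * ((b : CircleDeg1Lift) * (a : CircleDeg1Lift)) *
            ((a⁻¹ : CircleDeg1Liftˣ) : CircleDeg1Lift)
            = (a : CircleDeg1Lift) * (b : CircleDeg1Lift) *
              (((a : CircleDeg1Liftˣ) : CircleDeg1Lift) *
                ((a⁻¹ : CircleDeg1Liftˣ) : CircleDeg1Lift)) := by
              rw [mul_assoc, mul_assoc, mul_assoc]
          _ = (a : CircleDeg1Lift) * b := by rw [h3, mul_one]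
      rw [heq] at this
      exact this
    rw [hconj] at hmono
    push_cast at hmono
    linarith
  obtain ⟨y, hy⟩ := key
  -- evaluate the commutator at the point `b a y`
  set x := ((b : CircleDeg1Lift) * a) y with hx
  have happ : ((⁅a, b⁆ : CircleDeg1Liftˣ) : CircleDeg1Lift) x
      = ((a : CircleDeg1Lift) * b) y := by
    have : ((⁅a, b⁆ : CircleDeg1Liftˣ) : CircleDeg1Lift) x
        = (((⁅a, b⁆ : CircleDeg1Liftˣ) * (b * a) : CircleDeg1Liftˣ) : CircleDeg1Lift) y := by
      rw [Units.val_mul, CircleDeg1Lift.mul_apply]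
      rfl
    rw [this]
    have hgrp : (⁅a, b⁆ : CircleDeg1Liftˣ) * (b * a) = a * b := by
      group
    rw [hgrp, Units.val_mul]
  have : ((⁅a, b⁆ : CircleDeg1Liftˣ) : CircleDeg1Lift) x ≤ x + (1 : ℤ) := by
    rw [happ, hx]
    push_cast
    linarith
  have h9 := CircleDeg1Lift.translationNumber_le_of_le_add_int
    ((⁅a, b⁆ : CircleDeg1Liftˣ) : CircleDeg1Lift) this
  push_cast at h9
  linarith

/-- The displacement of a commutator is everywhere less than 2. -/
theorem commutator_apply_lt (a b : CircleDeg1Liftˣ) (x : ℝ) :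
    ((⁅a, b⁆ : CircleDeg1Liftˣ) : CircleDeg1Lift) x < x + 2 := by
  have h1 := map_lt_add_translationNumber_add_one ((⁅a, b⁆ : CircleDeg1Liftˣ) : CircleDeg1Lift) x
  have h2 := translationNumber_commutator_le_one a b
  linarith

/-- Multiplying by a commutator increases the translation number by at most 2. -/
theorem translationNumber_commutator_mul_le (a b : CircleDeg1Liftˣ) (h : CircleDeg1Lift) :
    τ (((⁅a, b⁆ : CircleDeg1Liftˣ) : CircleDeg1Lift) * h) ≤ 2 + τ h := by
  have hle : ((⁅a, b⁆ : CircleDeg1Liftˣ) : CircleDeg1Lift) * h ≤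
      ((translate (Multiplicative.ofAdd ((2:ℕ) : ℝ)) : CircleDeg1Liftˣ) : CircleDeg1Lift) * h := by
    intro x
    rw [CircleDeg1Lift.mul_apply, CircleDeg1Lift.mul_apply]
    have h2 : ((translate (Multiplicative.ofAdd ((2:ℕ) : ℝ)) : CircleDeg1Liftˣ)
        : CircleDeg1Lift) (h x) = ((2:ℕ) : ℝ) + h x := translate_apply _ _
    rw [h2]
    have := commutator_apply_lt a b (h x)
    push_cast
    linarith
  have hmono := translationNumber_mono hle
  rw [translationNumber_translate_mul 2 h] at hmono
  push_cast at hmono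
  linarith

/-- Milnor–Wood inequality: the translation number of a product of `m ≥ 1` commutators
is at most `2 m - 1`. -/
theorem translationNumber_prod_commutators_le (l : List CircleDeg1Liftˣ)
    (hne : l ≠ []) (hcomm : ∀ u ∈ l, ∃ a b : CircleDeg1Liftˣ, u = ⁅a, b⁆) :
    τ ((l.prod : CircleDeg1Liftˣ) : CircleDeg1Lift) ≤ 2 * l.length - 1 := by
  induction l with
  | nil => exact absurd rfl hne
  | cons c l ih =>
      obtain ⟨a, b, hab⟩ := hcomm c (List.mem_cons_self)
      rcases List.eq_nil_or_concat l with hl | _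
      · subst hl
        simp only [List.prod_cons, List.prod_nil, mul_one, List.length_cons,
          List.length_nil]
        rw [hab]
        have := translationNumber_commutator_le_one a b
        push_cast
        linarith
      case inr h' =>
        have hlne : l ≠ [] := by
          obtain ⟨L, x, rfl⟩ := h'
          simp
        have hrec := ih hlne (fun u hu => hcomm u (List.mem_cons_of_mem c hu))
        rw [List.prod_cons, Units.val_mul, hab]
        have := translationNumber_commutator_mul_le a b ((l.prod : CircleDeg1Liftˣ) : CircleDeg1Lift)
        simp only [List.length_cons]
        push_cast
        push_cast at hrec
        linarith




variable {X : Type*} [DecidableEq X]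

/-- `Canc p q` means the two-letter word `p q` cancels. -/
def Canc (p q : X × Bool) : Prop := p.1 = q.1 ∧ p.2 = !q.2

/-- A word is reduced if no two adjacent letters cancel. -/
def IsRed (w : List (X × Bool)) : Prop := List.Chain' (fun p q => ¬ Canc p q) w

theorem reduce_eq_self {w : List (X × Bool)} (h : IsRed w) : FreeGroup.reduce w = w := by
  induction w with
  | nil => rfl
  | cons p t ih =>
      have ht : IsRed t := List.IsChain.tail h
      have hred : FreeGroup.reduce t = t := ih ht
      rw [FreeGroup.reduce.cons, hred]
      cases t with
      | nil => rfl
      | cons q t' =>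
          have hpq : ¬ Canc p q := (List.isChain_cons_cons.mp h).1
          have : ¬ (p.1 = q.1 ∧ p.2 = !q.2) := hpq
          simp only [this, if_false]

theorem isRed_toWord (g : FreeGroup X) : IsRed g.toWord := by
  by_contra hc
  rw [IsRed, List.Chain', List.isChain_iff_getElem] at hc
  push_neg at hc
  obtain ⟨i, hi, hcanc⟩ := hc
  obtain ⟨h1, h2⟩ := hcanc
  set w := g.toWord with hw
  have hsplit : w = w.take i ++ (w.get ⟨i, by omega⟩) ::
      (w.get ⟨i + 1, by omega⟩) :: w.drop (i + 2) := by
    have e1 : w.drop i = w.get ⟨i, by omega⟩ :: w.drop (i + 1) :=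
      List.drop_eq_getElem_cons (by omega)
    have e2 : w.drop (i + 1) = w.get ⟨i + 1, by omega⟩ :: w.drop (i + 2) :=
      List.drop_eq_getElem_cons (by omega)
    rw [← e2, ← e1, List.take_append_drop]
  have hget : w.get ⟨i + 1, by omega⟩ = ((w.get ⟨i, by omega⟩).1,
      !(w.get ⟨i, by omega⟩).2) := by
    have hb : (w.get ⟨i + 1, by omega⟩).2 = !(w.get ⟨i, by omega⟩).2 := by
      simp only [List.get_eq_getElem]
      rw [h2, Bool.not_not]
    exact Prod.ext h1.symm hb
  have hred : FreeGroup.reduce w = w := by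
    rw [hw]; exact FreeGroup.reduce_toWord g
  rw [hsplit, hget] at hred
  exact FreeGroup.reduce.not hred

/-- Cyclically reduced non-empty word. -/
structure CycWord (X : Type*) where
  w : List (X × Bool)
  ne : w ≠ []
  red : IsRed w
  wrap : ∀ p ∈ w.getLast?, ∀ q ∈ w.head?, ¬ Canc p q

/-- Every non-trivial element of a free group is conjugate to one with cyclically
reduced word. -/
theorem exists_cycWord (g : FreeGroup X) (hg : g ≠ 1) :
    ∃ (u c : FreeGroup X) (C : CycWord X), g = u * c * u⁻¹ ∧ c.toWord = C.w := by
  suffices H : ∀ (N : ℕ) (g : FreeGroup X), g.toWord.length ≤ N → g ≠ 1 →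
      ∃ (u c : FreeGroup X) (C : CycWord X), g = u * c * u⁻¹ ∧ c.toWord = C.w by
    exact H g.toWord.length g le_rfl hg
  intro N
  induction N with
  | zero =>
      intro g hlen hg
      exfalso
      apply hg
      rw [← FreeGroup.toWord_eq_nil_iff]
      exact List.length_eq_zero_iff.mp (Nat.le_zero.mp hlen)
  | succ N ih =>
      intro g hlen hg
      have hne : g.toWord ≠ [] := fun h => hg (FreeGroup.toWord_eq_nil_iff.mp h)
      obtain ⟨a, t, hat⟩ := List.exists_cons_of_ne_nil hne
      rcases List.eq_nil_or_concat' t with ht | ⟨t', z, rfl⟩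
      · -- single letter: automatically cyclically reduced
        subst ht
        refine ⟨1, g, ⟨g.toWord, hne, isRed_toWord g, ?_⟩, by group, rfl⟩
        rw [hat]
        intro p hp q hq
        simp only [List.getLast?_singleton, Option.mem_def, Option.some_inj] at hp
        simp only [List.head?_cons, Option.mem_def, Option.some_inj] at hq
        subst hp; subst hq
        rintro ⟨-, h2⟩
        simp at h2
      · by_cases hca : Canc z a
        · -- peel a conjugating letter
          obtain ⟨hz1, hz2⟩ := hca
          have hz : z = (a.1, !a.2) := by
            refine Prod.ext hz1 ?_
            rcases Bool.eq_false_or_eq_true a.2 with h | h <;> simp_all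
          have hred : IsRed g.toWord := isRed_toWord g
          rw [hat] at hred
          have hredt : IsRed t' := by
            have h1 : List.Chain' (fun p q => ¬ Canc p q) (t' ++ [z]) :=
              List.IsChain.tail hred
            exact (List.isChain_append.mp h1).1
          set g' := FreeGroup.mk t' with hg'
          have htw : g'.toWord = t' := by
            rw [hg', FreeGroup.toWord_mk, reduce_eq_self hredt]
          have hdecomp : g = FreeGroup.mk [a] * g' * (FreeGroup.mk [a])⁻¹ := by
            have h0 : g = FreeGroup.mk (a :: (t' ++ [z])) := by
              rw [← hat, FreeGroup.mk_toWord]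
            have h1 : (FreeGroup.mk [a])⁻¹ = FreeGroup.mk [z] := by
              rw [FreeGroup.inv_mk]
              congr 1
              simp [FreeGroup.invRev, hz]
            rw [h0, h1, hg', FreeGroup.mul_mk, FreeGroup.mul_mk]
            rfl
          have hg'ne : g' ≠ 1 := by
            intro h0
            apply hg
            rw [hdecomp, h0]
            group
          have hlen' : g'.toWord.length ≤ N := by
            rw [htw]
            have : g.toWord.length = t'.length + 2 := by
              rw [hat]; simp
            omega
          obtain ⟨u', c, C, hdec', hcw⟩ := ih g' hlen' hg'ne
          refine ⟨FreeGroup.mk [a] * u', c, C, ?_, hcw⟩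
          rw [hdecomp, hdec']
          group
        · -- already cyclically reduced
          refine ⟨1, g, ⟨g.toWord, hne, isRed_toWord g, ?_⟩, by group, rfl⟩
          rw [hat]
          intro p hp q hq
          have hp' : p = z := by
            have : (a :: (t' ++ [z])).getLast? = some z := by
              rw [List.getLast?_eq_getLast (by simp), List.getLast_cons (by simp)]
              simp
            rw [this] at hp
            exact (by simpa using hp : z = p).symm
          have hq' : q = a := by
            simp only [List.head?_cons, Option.mem_def, Option.some_inj] at hq
            exact hq.symm
          subst hp'; subst hq'
          exact hca


namespace CycWord

open CircleDeg1Lift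
open scoped Classical

variable {X : Type*} [DecidableEq X] (C : CycWord X)

/-- The length of the cyclic word, as an integer. -/
def len : ℤ := C.w.length

theorem len_pos : 0 < C.len := by
  have := List.length_pos_iff.mpr C.ne
  unfold len
  exact_mod_cast this

theorem emod_toNat_lt (t : ℤ) : (t % C.len).toNat < C.w.length := by
  have h0 : 0 < C.len := C.len_pos
  have h1 : 0 ≤ t % C.len := Int.emod_nonneg t (by omega)
  have h2 : t % C.len < C.len := Int.emod_lt_of_pos t h0
  have hLdef : C.len = (C.w.length : ℤ) := rfl
  omega

/-- The bi-infinite periodic letter pattern. -/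
def letter (t : ℤ) : X × Bool := C.w.get ⟨(t % C.len).toNat, C.emod_toNat_lt t⟩

theorem letter_congr {t t' : ℤ} (h : t % C.len = t' % C.len) : C.letter t = C.letter t' := by
  unfold letter
  congr 1
  exact Fin.ext (show (t % C.len).toNat = (t' % C.len).toNat by rw [h])

theorem letter_add_len (t : ℤ) : C.letter (t + C.len) = C.letter t :=
  C.letter_congr (by
    conv_lhs => rw [show t + C.len = t + C.len * 1 by ring]
    rw [Int.add_mul_emod_self_left])

theorem letter_red (t : ℤ) : ¬ Canc (C.letter t) (C.letter (t + 1)) := by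
  have h0 : 0 < C.len := C.len_pos
  have hj0 : 0 ≤ t % C.len := Int.emod_nonneg t (by omega)
  have hjl : t % C.len < C.len := Int.emod_lt_of_pos t h0
  have hsplit : C.len * (t / C.len) + t % C.len = t := Int.mul_ediv_add_emod t C.len
  have hLdef : C.len = (C.w.length : ℤ) := rfl
  by_cases hcase : t % C.len + 1 < C.len
  · -- interior adjacency: use `red`
    have h1 : (t + 1) % C.len = t % C.len + 1 := by
      conv_lhs => rw [show t + 1 = (t % C.len + 1) + C.len * (t / C.len) by omega]
      rw [Int.add_mul_emod_self_left]
      exact Int.emod_eq_of_lt (by omega) hcase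
    have hred := C.red
    rw [IsRed, List.Chain', List.isChain_iff_getElem] at hred
    have hlt : (t % C.len).toNat < C.w.length - 1 := by
      omega
    have := hred (t % C.len).toNat (by omega)
    have e1 : C.letter t = C.w.get ⟨(t % C.len).toNat, by omega⟩ := rfl
    have e2 : C.letter (t + 1) = C.w.get ⟨(t % C.len).toNat + 1, by omega⟩ := by
      unfold letter
      congr 1
      exact Fin.ext (show ((t + 1) % C.len).toNat = (t % C.len).toNat + 1 by rw [h1]; omega)
    rw [e1, e2]
    exact this
  · -- wrap-around adjacency: use `wrap`
    have hjtop : t % C.len = C.len - 1 := by omega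
    have h1 : (t + 1) % C.len = 0 := by
      conv_lhs => rw [show t + 1 = C.len * (t / C.len + 1) by rw [mul_add, mul_one]; omega]
      exact Int.mul_emod_right _ _
    have e1 : C.letter t = C.w.getLast C.ne := by
      rw [List.getLast_eq_getElem]
      unfold letter
      simp only [List.get_eq_getElem]
      congr 1
      rw [hjtop]
      omega
    have e2 : C.letter (t + 1) = C.w.head C.ne := by
      rw [List.head_eq_getElem_zero]
      unfold letter
      simp only [List.get_eq_getElem]
      congr 1
      rw [h1]
      simp
    rw [e1, e2]
    exact C.wrap _ (by rw [List.getLast?_eq_getLast C.ne]; rfl)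
      _ (by rw [List.head?_eq_head C.ne]; rfl)

/-- `t` is a source point for the generator `x`. -/
def srcP (x : X) (t : ℤ) : Prop :=
  C.letter (t - 1) = (x, true) ∨ C.letter t = (x, false)

theorem srcP_shift (x : X) (t : ℤ) : C.srcP x (t + C.len) ↔ C.srcP x t := by
  unfold srcP
  rw [show t + C.len - 1 = (t - 1) + C.len by ring, C.letter_add_len, C.letter_add_len]

theorem srcP_shift_mul (x : X) : ∀ (k t : ℤ), C.srcP x (t + k * C.len) ↔ C.srcP x t := by
  intro k
  induction k using Int.induction_on with
  | zero => simp
  | succ k ih =>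
      intro t
      rw [show t + (k + 1 : ℤ) * C.len = (t + k * C.len) + C.len by ring,
        C.srcP_shift, ih]
  | pred k ih =>
      intro t
      have := C.srcP_shift x (t + (-(k:ℤ) - 1) * C.len)
      rw [show t + (-(k:ℤ) - 1) * C.len + C.len = t + (-(k:ℤ)) * C.len by ring] at this
      rw [← this, ih]

/-- The target of a source point. -/
noncomputable def tgt (x : X) (t : ℤ) : ℤ :=
  if C.letter (t - 1) = (x, true) then t - 1 else t + 1

theorem tgt_down {x : X} {t : ℤ} (h : C.letter (t - 1) = (x, true)) :
    C.tgt x t = t - 1 := by simp [tgt, h]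

theorem tgt_up {x : X} {t : ℤ} (h : C.letter t = (x, false)) : C.tgt x t = t + 1 := by
  have hnot : ¬ (C.letter (t - 1) = (x, true)) := by
    intro hc
    apply C.letter_red (t - 1)
    rw [show t - 1 + 1 = t by ring, hc, h]
    exact ⟨rfl, by simp⟩
  simp [tgt, hnot]

theorem tgt_shift (x : X) (t : ℤ) : C.tgt x (t + C.len) = C.tgt x t + C.len := by
  unfold tgt
  rw [show t + C.len - 1 = (t - 1) + C.len by ring, C.letter_add_len]
  split <;> ring

theorem tgt_lt_tgt {x : X} {s s' : ℤ} (hs : C.srcP x s) (hs' : C.srcP x s')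
    (hlt : s < s') : C.tgt x s < C.tgt x s' := by
  by_cases h1 : C.letter (s - 1) = (x, true) <;>
    by_cases h2 : C.letter (s' - 1) = (x, true)
  · rw [C.tgt_down h1, C.tgt_down h2]; omega
  · have h2' : C.letter s' = (x, false) := hs'.resolve_left h2
    rw [C.tgt_down h1, C.tgt_up h2']; omega
  · -- the interesting case: up then down
    have h1' : C.letter s = (x, false) := hs.resolve_left h1
    rw [C.tgt_up h1', C.tgt_down h2]
    -- need s + 1 < s' - 1
    have hne1 : s' ≠ s + 1 := by
      intro he
      rw [he] at h2
      rw [show s + 1 - 1 = s by ring] at h2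
      rw [h1'] at h2
      simp at h2
    have hne2 : s' ≠ s + 2 := by
      intro he
      apply C.letter_red s
      rw [he] at h2
      rw [show s + 2 - 1 = s + 1 by ring] at h2
      rw [h1', h2]
      exact ⟨rfl, by simp⟩
    omega
  · have h1' : C.letter s = (x, false) := hs.resolve_left h1
    have h2' : C.letter s' = (x, false) := hs'.resolve_left h2
    rw [C.tgt_up h1', C.tgt_up h2']; omega

/-- The window of source points in `[0, len)`. -/
noncomputable def win (x : X) : List ℕ :=
  (List.range C.w.length).filter (fun j => decide (C.srcP x (j : ℤ)))

theorem mem_win {x : X} {j : ℕ} : j ∈ C.win x ↔ j < C.w.length ∧ C.srcP x (j : ℤ) := by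
  simp [win, List.mem_filter, List.mem_range]

theorem win_sorted (x : X) : (C.win x).Pairwise (· < ·) :=
  List.pairwise_lt_range.filter _

theorem win_lt_len {x : X} {j : ℕ} (h : j ∈ C.win x) : (j : ℤ) < C.len := by
  have := (C.mem_win.mp h).1
  unfold len
  exact_mod_cast this

section Gen

theorem rr_pos (x : X) (hx : C.win x ≠ []) : 0 < ((C.win x).length : ℤ) := by
  have := List.length_pos_iff.mpr hx
  exact_mod_cast this

theorem emod_rr_lt (x : X) (hx : C.win x ≠ []) (i : ℤ) : (i % ((C.win x).length : ℤ)).toNat < (C.win x).length := by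
  have h0 := C.rr_pos x hx
  have h1 : 0 ≤ i % ((C.win x).length : ℤ) := Int.emod_nonneg i (by omega)
  have h2 : i % ((C.win x).length : ℤ) < ((C.win x).length : ℤ) :=
    Int.emod_lt_of_pos i h0
  omega

/-- The enumeration of all source points of `x`, in increasing order. -/
noncomputable def aFn (x : X) (hx : C.win x ≠ []) (i : ℤ) : ℤ :=
  ((C.win x).get ⟨(i % ((C.win x).length : ℤ)).toNat, C.emod_rr_lt x hx i⟩ : ℤ)
    + C.len * (i / ((C.win x).length : ℤ))

theorem aFn_val (x : X) (hx : C.win x ≠ []) (i : ℤ) {k : ℕ} {q : ℤ}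
    (hk : (i % ((C.win x).length : ℤ)).toNat = k) (hq : i / ((C.win x).length : ℤ) = q)
    (hkl : k < (C.win x).length) :
    C.aFn x hx i = ((C.win x).get ⟨k, hkl⟩ : ℤ) + C.len * q := by
  unfold aFn
  have hfin : (⟨(i % ((C.win x).length : ℤ)).toNat, C.emod_rr_lt x hx i⟩
      : Fin (C.win x).length) = ⟨k, hkl⟩ := Fin.ext hk
  rw [hfin, hq]

theorem aFn_src (x : X) (hx : C.win x ≠ []) (i : ℤ) : C.srcP x (C.aFn x hx i) := by
  set j := (C.win x).get ⟨(i % ((C.win x).length : ℤ)).toNat, C.emod_rr_lt x hx i⟩ with hj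
  have hmem : j ∈ C.win x := List.get_mem _ _
  have hsrc : C.srcP x (j : ℤ) := (C.mem_win.mp hmem).2
  have := (C.srcP_shift_mul x (i / ((C.win x).length : ℤ)) (j : ℤ)).mpr hsrc
  unfold aFn
  rw [← hj]
  convert this using 2
  ring

theorem aFn_per (x : X) (hx : C.win x ≠ []) (i : ℤ) :
    C.aFn x hx (i + ((C.win x).length : ℤ)) = C.aFn x hx i + C.len := by
  have h0 := C.rr_pos x hx
  have e1 : (i + ((C.win x).length : ℤ)) % ((C.win x).length : ℤ)
      = i % ((C.win x).length : ℤ) := by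
    conv_lhs => rw [show i + ((C.win x).length : ℤ)
      = i + ((C.win x).length : ℤ) * 1 by ring]
    rw [Int.add_mul_emod_self_left]
  have e2 : (i + ((C.win x).length : ℤ)) / ((C.win x).length : ℤ)
      = i / ((C.win x).length : ℤ) + 1 := by
    conv_lhs => rw [show i + ((C.win x).length : ℤ)
      = i + 1 * ((C.win x).length : ℤ) by ring]
    rw [Int.add_mul_ediv_right _ _ (by omega)]
  rw [C.aFn_val x hx (i + ((C.win x).length : ℤ)) (k := (i % ((C.win x).length : ℤ)).toNat)
    (q := i / ((C.win x).length : ℤ) + 1) (by rw [e1]) e2 (C.emod_rr_lt x hx i),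
    C.aFn_val x hx i rfl rfl (C.emod_rr_lt x hx i)]
  ring

theorem aFn_lt (x : X) (hx : C.win x ≠ []) (i : ℤ) :
    C.aFn x hx i < C.aFn x hx (i + 1) := by
  have h0 := C.rr_pos x hx
  have hj0 : 0 ≤ i % ((C.win x).length : ℤ) := Int.emod_nonneg i (by omega)
  have hjr : i % ((C.win x).length : ℤ) < ((C.win x).length : ℤ) :=
    Int.emod_lt_of_pos i h0
  have hsplit : ((C.win x).length : ℤ) * (i / ((C.win x).length : ℤ))
      + i % ((C.win x).length : ℤ) = i := Int.mul_ediv_add_emod i _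
  have hv1 : C.aFn x hx i = ((C.win x).get ⟨(i % ((C.win x).length : ℤ)).toNat,
      C.emod_rr_lt x hx i⟩ : ℤ) + C.len * (i / ((C.win x).length : ℤ)) :=
    C.aFn_val x hx i rfl rfl _
  by_cases hc : i % ((C.win x).length : ℤ) + 1 < ((C.win x).length : ℤ)
  · have e1 : (i + 1) % ((C.win x).length : ℤ) = i % ((C.win x).length : ℤ) + 1 := by
      conv_lhs => rw [show i + 1 = (i % ((C.win x).length : ℤ) + 1)
        + ((C.win x).length : ℤ) * (i / ((C.win x).length : ℤ)) by omega]
      rw [Int.add_mul_emod_self_left]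
      exact Int.emod_eq_of_lt (by omega) hc
    have e2 : (i + 1) / ((C.win x).length : ℤ) = i / ((C.win x).length : ℤ) := by
      conv_lhs => rw [show i + 1 = (i % ((C.win x).length : ℤ) + 1)
        + (i / ((C.win x).length : ℤ)) * ((C.win x).length : ℤ) by
          rw [mul_comm]; omega]
      rw [Int.add_mul_ediv_right _ _ (by omega)]
      rw [Int.ediv_eq_zero_of_lt (by omega) hc]
      omega
    have hkl : (i % ((C.win x).length : ℤ)).toNat + 1 < (C.win x).length := by omega
    have hv2 : C.aFn x hx (i + 1) = ((C.win x).get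
        ⟨(i % ((C.win x).length : ℤ)).toNat + 1, hkl⟩ : ℤ)
        + C.len * (i / ((C.win x).length : ℤ)) :=
      C.aFn_val x hx (i + 1) (by rw [e1]; omega) e2 hkl
    rw [hv1, hv2]
    have hget : ((C.win x).get ⟨(i % ((C.win x).length : ℤ)).toNat,
        C.emod_rr_lt x hx i⟩ : ℕ) < ((C.win x).get
        ⟨(i % ((C.win x).length : ℤ)).toNat + 1, hkl⟩ : ℕ) :=
      List.pairwise_iff_get.mp (C.win_sorted x) _ _
        (by simp only [Fin.mk_lt_mk]; omega)
    omega
  · have e1 : (i + 1) % ((C.win x).length : ℤ) = 0 := by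
      conv_lhs => rw [show i + 1 = ((C.win x).length : ℤ)
        * (i / ((C.win x).length : ℤ) + 1) by rw [mul_add, mul_one]; omega]
      exact Int.mul_emod_right _ _
    have e2 : (i + 1) / ((C.win x).length : ℤ) = i / ((C.win x).length : ℤ) + 1 := by
      conv_lhs => rw [show i + 1 = 0 + (i / ((C.win x).length : ℤ) + 1)
        * ((C.win x).length : ℤ) by rw [add_mul, one_mul, mul_comm]; omega]
      rw [Int.add_mul_ediv_right _ _ (by omega)]
      simp
    have hkl : 0 < (C.win x).length := by omega
    have hv2 : C.aFn x hx (i + 1) = ((C.win x).get ⟨0, hkl⟩ : ℤ)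
        + C.len * (i / ((C.win x).length : ℤ) + 1) :=
      C.aFn_val x hx (i + 1) (by rw [e1]; rfl) e2 hkl
    rw [hv1, hv2]
    have hlt1 : ((C.win x).get ⟨(i % ((C.win x).length : ℤ)).toNat,
        C.emod_rr_lt x hx i⟩ : ℤ) < C.len := C.win_lt_len (List.get_mem _ _)
    have hge : (0 : ℤ) ≤ ((C.win x).get ⟨0, hkl⟩ : ℤ) := by positivity
    have hd : C.len * (i / ((C.win x).length : ℤ) + 1)
        = C.len * (i / ((C.win x).length : ℤ)) + C.len := by ring
    omega

theorem aFn_surj (x : X) (hx : C.win x ≠ []) {t : ℤ} (ht : C.srcP x t) :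
    ∃ i, C.aFn x hx i = t := by
  have h0 := C.rr_pos x hx
  have hL := C.len_pos
  have hj0 : 0 ≤ t % C.len := Int.emod_nonneg t (by omega)
  have hjL : t % C.len < C.len := Int.emod_lt_of_pos t hL
  have hsplit : C.len * (t / C.len) + t % C.len = t := Int.mul_ediv_add_emod t _
  have hsrcj : C.srcP x (t % C.len) := by
    have h5 := C.srcP_shift_mul x (t / C.len) (t % C.len)
    rw [show t % C.len + t / C.len * C.len = t by rw [mul_comm]; omega] at h5
    exact h5.mp ht
  have hLdef : C.len = (C.w.length : ℤ) := rfl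
  have hmem : (t % C.len).toNat ∈ C.win x := by
    rw [C.mem_win]
    refine ⟨by omega, ?_⟩
    rw [show (((t % C.len).toNat : ℤ)) = t % C.len by omega]
    exact hsrcj
  obtain ⟨k, hk⟩ := List.mem_iff_get.mp hmem
  refine ⟨(t / C.len) * ((C.win x).length : ℤ) + (k : ℤ), ?_⟩
  have hkr : (k : ℤ) < ((C.win x).length : ℤ) := by exact_mod_cast k.isLt
  have e1 : ((t / C.len) * ((C.win x).length : ℤ) + (k : ℤ)) % ((C.win x).length : ℤ)
      = (k : ℤ) := by
    conv_lhs => rw [show (t / C.len) * ((C.win x).length : ℤ) + (k : ℤ)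
      = (k : ℤ) + ((C.win x).length : ℤ) * (t / C.len) by ring]
    rw [Int.add_mul_emod_self_left]
    exact Int.emod_eq_of_lt (by positivity) hkr
  have e2 : ((t / C.len) * ((C.win x).length : ℤ) + (k : ℤ)) / ((C.win x).length : ℤ)
      = t / C.len := by
    conv_lhs => rw [show (t / C.len) * ((C.win x).length : ℤ) + (k : ℤ)
      = (k : ℤ) + (t / C.len) * ((C.win x).length : ℤ) by ring]
    rw [Int.add_mul_ediv_right _ _ (by omega)]
    rw [Int.ediv_eq_zero_of_lt (by positivity) hkr]
    omega
  have hv : C.aFn x hx ((t / C.len) * ((C.win x).length : ℤ) + (k : ℤ))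
      = ((C.win x).get ⟨(k : ℕ), k.isLt⟩ : ℤ) + C.len * (t / C.len) :=
    C.aFn_val x hx _ (by rw [e1]; omega) e2 k.isLt
  rw [hv]
  have hk' : (C.win x).get ⟨(k : ℕ), k.isLt⟩ = (C.win x).get k := by congr 1
  rw [hk', hk]
  omega

/-- The source knots, scaled to the circle of circumference 1. -/
noncomputable def eK (x : X) (hx : C.win x ≠ []) : ℤ → ℝ := fun i => (C.aFn x hx i : ℝ) / (C.len : ℝ)

/-- The target knots. -/
noncomputable def vK (x : X) (hx : C.win x ≠ []) : ℤ → ℝ := fun i => (C.tgt x (C.aFn x hx i) : ℝ) / (C.len : ℝ)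

theorem knots_e (x : X) (hx : C.win x ≠ []) : Knots (C.eK x hx) ((C.win x).length : ℤ) := by
  have hL : (0:ℝ) < (C.len : ℝ) := by exact_mod_cast C.len_pos
  refine ⟨C.rr_pos x hx, ?_, ?_⟩
  · intro i
    unfold eK
    have := C.aFn_lt x hx i
    apply div_lt_div_of_pos_right ?_ hL
    exact_mod_cast this
  · intro i
    unfold eK
    rw [C.aFn_per x hx i]
    push_cast
    field_simp

theorem knots_v (x : X) (hx : C.win x ≠ []) : Knots (C.vK x hx) ((C.win x).length : ℤ) := by
  have hL : (0:ℝ) < (C.len : ℝ) := by exact_mod_cast C.len_pos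
  refine ⟨C.rr_pos x hx, ?_, ?_⟩
  · intro i
    unfold vK
    have := C.tgt_lt_tgt (C.aFn_src x hx i) (C.aFn_src x hx (i+1)) (C.aFn_lt x hx i)
    apply div_lt_div_of_pos_right ?_ hL
    exact_mod_cast this
  · intro i
    unfold vK
    rw [C.aFn_per x hx i, C.tgt_shift]
    push_cast
    field_simp

end Gen

/-- The generator images of the representation. -/
noncomputable def gen (x : X) : CircleDeg1Liftˣ :=
  if hx : C.win x ≠ [] then plUnit (C.knots_e x hx) (C.knots_v x hx) else 1

theorem gen_src {x : X} {t : ℤ} (ht : C.srcP x t) :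
    ((C.gen x : CircleDeg1Liftˣ) : CircleDeg1Lift) ((t : ℝ) / (C.len : ℝ))
      = ((C.tgt x t : ℝ)) / (C.len : ℝ) := by
  have hL := C.len_pos
  have hmem : (t % C.len).toNat ∈ C.win x := by
    rw [C.mem_win]
    refine ⟨C.emod_toNat_lt t, ?_⟩
    have h1 : 0 ≤ t % C.len := Int.emod_nonneg t (by omega)
    have h2 : (((t % C.len).toNat : ℤ)) = t % C.len := by omega
    rw [h2]
    have h5 := (C.srcP_shift_mul x (t / C.len) (t % C.len))
    rw [show t % C.len + t / C.len * C.len = t by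
      rw [mul_comm]; have := Int.mul_ediv_add_emod t C.len; omega] at h5
    exact h5.mp ht
  have hx : C.win x ≠ [] := List.ne_nil_of_mem hmem
  rw [gen, dif_pos hx]
  obtain ⟨i, hi⟩ := C.aFn_surj x hx ht
  have := plUnit_knot (C.knots_e x hx) (C.knots_v x hx) i
  unfold eK vK at this
  rw [hi] at this
  exact this

theorem gen_down {x : X} {t : ℤ} (h : C.letter (t - 1) = (x, true)) :
    ((C.gen x : CircleDeg1Liftˣ) : CircleDeg1Lift) ((t : ℝ) / (C.len : ℝ))
      = ((t : ℝ) - 1) / (C.len : ℝ) := by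
  have := C.gen_src (Or.inl h : C.srcP x t)
  rw [C.tgt_down h] at this
  rw [this]
  push_cast
  ring_nf

theorem gen_up_inv {x : X} {t : ℤ} (h : C.letter t = (x, false)) :
    (((C.gen x)⁻¹ : CircleDeg1Liftˣ) : CircleDeg1Lift) (((t : ℝ) + 1) / (C.len : ℝ))
      = (t : ℝ) / (C.len : ℝ) := by
  have h1 : ((C.gen x : CircleDeg1Liftˣ) : CircleDeg1Lift) ((t : ℝ) / (C.len : ℝ))
      = ((t : ℝ) + 1) / (C.len : ℝ) := by
    have := C.gen_src (Or.inr h : C.srcP x t)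
    rw [C.tgt_up h] at this
    rw [this]
    push_cast
    ring_nf
  rw [← h1]
  exact CircleDeg1Lift.units_inv_apply_apply _ _

end CycWord

namespace CycWord

variable {X : Type*} [DecidableEq X] (C : CycWord X)

theorem eval : ∀ (d j : ℕ), j + d = C.w.length →
    ((FreeGroup.lift C.gen (FreeGroup.mk (C.w.drop j)) : CircleDeg1Liftˣ) : CircleDeg1Lift)
      ((C.w.length : ℝ) / (C.len : ℝ)) = (j : ℝ) / (C.len : ℝ) := by
  intro d
  induction d with
  | zero =>
      intro j hj
      have hj' : j = C.w.length := by omega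
      subst hj'
      rw [List.drop_length, ← FreeGroup.one_eq_mk, map_one]
      simp
  | succ d ih =>
      intro j hj
      have hjlt : j < C.w.length := by omega
      have hL := C.len_pos
      have hLdef : C.len = (C.w.length : ℤ) := rfl
      rw [List.drop_eq_getElem_cons hjlt]
      have hsplit : FreeGroup.mk (C.w[j] :: C.w.drop (j+1))
          = FreeGroup.mk [C.w[j]] * FreeGroup.mk (C.w.drop (j+1)) := by
        rw [FreeGroup.mul_mk]
        rfl
      rw [hsplit, map_mul, Units.val_mul, CircleDeg1Lift.mul_apply, ih (j+1) (by omega)]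
      have hletter : C.letter (j : ℤ) = C.w[j] := by
        unfold letter
        simp only [List.get_eq_getElem]
        congr 1
        rw [Int.emod_eq_of_lt (by positivity) (by omega)]
        omega
      rcases hw : C.w[j] with ⟨z, b⟩
      rw [hw] at hletter
      cases b
      · -- inverse letter: apply (gen z)⁻¹
        have hlift : FreeGroup.lift C.gen (FreeGroup.mk [(z, false)]) = (C.gen z)⁻¹ := by
          rw [FreeGroup.lift_mk]
          simp
        rw [hlift]
        have := C.gen_up_inv (x := z) (t := (j : ℤ)) hletter
        have harg : (((j + 1 : ℕ)) : ℝ) = ((j : ℤ) : ℝ) + 1 := by push_cast; ring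
        rw [harg, this]
        push_cast
        ring
      · -- positive letter: apply gen z
        have hlift : FreeGroup.lift C.gen (FreeGroup.mk [(z, true)]) = C.gen z := by
          rw [FreeGroup.lift_mk]
          simp
        rw [hlift]
        have := C.gen_down (x := z) (t := ((j : ℤ) + 1)) (by
          rw [show (j : ℤ) + 1 - 1 = (j : ℤ) by ring]
          exact hletter)
        have harg : (((j + 1 : ℕ)) : ℝ) = (((j : ℤ) + 1 : ℤ) : ℝ) := by push_cast; ring
        rw [harg, this]
        push_cast
        ring

theorem tau_lift_inv_eq_one (c : FreeGroup X) (hc : c.toWord = C.w) :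
    CircleDeg1Lift.translationNumber
      (((FreeGroup.lift C.gen c)⁻¹ : CircleDeg1Liftˣ) : CircleDeg1Lift) = 1 := by
  have hL := C.len_pos
  have h0 : ((FreeGroup.lift C.gen c : CircleDeg1Liftˣ) : CircleDeg1Lift) 1 = 0 := by
    have hmk : FreeGroup.mk (C.w.drop 0) = c := by
      rw [List.drop_zero, ← hc, FreeGroup.mk_toWord]
    have hev := C.eval (C.w.length) 0 (by omega)
    rw [hmk] at hev
    have hlen1 : ((C.w.length : ℝ)) / (C.len : ℝ) = 1 := by
      have he : (C.len : ℝ) = (C.w.length : ℝ) := by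
        unfold len
        push_cast
        rfl
      rw [he]
      apply div_self
      have : (0:ℝ) < (C.w.length : ℝ) := by
        have := List.length_pos_iff.mpr C.ne
        exact_mod_cast this
      linarith
    rw [hlen1] at hev
    rw [hev]
    simp
  have h1 : (((FreeGroup.lift C.gen c)⁻¹ : CircleDeg1Liftˣ) : CircleDeg1Lift) 0
      = 0 + ((1 : ℤ) : ℝ) := by
    have h2 := CircleDeg1Lift.units_inv_apply_apply (FreeGroup.lift C.gen c)
      (1 : ℝ)
    rw [h0] at h2
    rw [h2]
    norm_num
  have := CircleDeg1Lift.translationNumber_of_eq_add_int _ h1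
  rw [this]
  norm_num

end CycWord

end MWPL

theorem comm_count_ge_of_pow_eq_prod_commutators_freeGroup
    {X : Type*} [Fintype X] (g : FreeGroup X) (hg : g ≠ 1)
    (n m : ℕ) (hn : 1 ≤ n)
    (h : ∃ x y : Fin m → FreeGroup X, g ^ n = (List.ofFn fun i => ⁅x i, y i⁆).prod) :
    (n : ℝ) / 6 + 1 / 2 ≤ m := by
  classical
  obtain ⟨x, y, hprod⟩ := h
  obtain ⟨u, c, C, hguc, hcw⟩ := MWPL.exists_cycWord g hg
  set ρ := FreeGroup.lift C.gen with hρ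
  have hτ1 : CircleDeg1Lift.translationNumber
      (((ρ c)⁻¹ : CircleDeg1Liftˣ) : CircleDeg1Lift) = 1 :=
    C.tau_lift_inv_eq_one c hcw
  set M : FreeGroup X →* CircleDeg1Liftˣ :=
    ρ.comp (MulAut.conj u⁻¹).toMonoidHom with hM
  have hMc : ∀ z : FreeGroup X, M z = ρ (u⁻¹ * z * u) := by
    intro z
    simp only [hM, MonoidHom.comp_apply, MulEquiv.coe_toMonoidHom, MulAut.conj_apply,
      inv_inv]
  have hMg : M g = ρ c := by
    rw [hMc, hguc]
    congr 1
    group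
  have hτn : CircleDeg1Lift.translationNumber
      (((((M g)⁻¹) ^ n : CircleDeg1Liftˣ)) : CircleDeg1Lift) = (n : ℝ) := by
    rw [hMg, Units.val_pow_eq_pow_val, CircleDeg1Lift.translationNumber_pow, hτ1, mul_one]
  have hMgn : (M g) ^ n = (List.ofFn fun i => ⁅M (x i), M (y i)⁆).prod := by
    rw [← map_pow, hprod, map_list_prod, List.map_ofFn]
    have : (⇑M ∘ fun i => ⁅x i, y i⁆) = fun i => ⁅M (x i), M (y i)⁆ := by
      funext i
      simp only [Function.comp_apply, map_commutatorElement]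
    rw [this]
  have hinv : ((M g) ⁻¹) ^ n
      = (((List.ofFn fun i => ⁅M (x i), M (y i)⁆).map (fun z => z⁻¹)).reverse).prod := by
    rw [inv_pow, hMgn, List.prod_inv_reverse]
  set l := ((List.ofFn fun i => ⁅M (x i), M (y i)⁆).map (fun z => z⁻¹)).reverse with hl
  have hlen : l.length = m := by simp [hl]
  rcases Nat.eq_zero_or_pos m with hm | hm
  · exfalso
    have hlnil : l = [] := List.length_eq_zero_iff.mp (by omega)
    rw [hlnil, List.prod_nil] at hinv
    rw [hinv, Units.val_one, CircleDeg1Lift.translationNumber_one] at hτn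
    have : (n : ℝ) = 0 := hτn.symm
    have : n = 0 := by exact_mod_cast this
    omega
  · have hlne : l ≠ [] := by
      intro h0
      rw [h0] at hlen
      simp at hlen
      omega
    have hcomm : ∀ v ∈ l, ∃ a b : CircleDeg1Liftˣ, v = ⁅a, b⁆ := by
      intro v hv
      rw [hl, List.mem_reverse, List.mem_map] at hv
      obtain ⟨w, hw1, hw2⟩ := hv
      rw [List.mem_ofFn] at hw1
      obtain ⟨i, rfl⟩ := hw1
      exact ⟨M (y i), M (x i), by rw [← hw2, commutatorElement_inv]⟩
    have hMW := MWPL.translationNumber_prod_commutators_le l hlne hcomm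
    rw [hlen] at hMW
    have hτeq : CircleDeg1Lift.translationNumber ((l.prod : CircleDeg1Liftˣ) : CircleDeg1Lift)
        = (n : ℝ) := by
      rw [← hinv]
      exact hτn
    rw [hτeq] at hMW
    have hm1 : (1 : ℝ) ≤ (m : ℝ) := by exact_mod_cast hm
    linarith
end

section
/- Let Γ be a finite simple graph and A(Γ) the right-angled Artin group defined by Γ. For every g ∈ A(Γ) and every n > 0, the minimal word length (with respect to the generators V(Γ) and their inverses) among all elements conjugate to g^n equals n times the minimal word length among all elements conjugate to g. -/
/-- The defining relators of a right-angled Artin group: one commutator for each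
edge of the graph. -/
def raagRels {V : Type*} (Γ : SimpleGraph V) : Set (FreeGroup V) :=
  {r | ∃ a b : V, Γ.Adj a b ∧
    r = FreeGroup.of a * FreeGroup.of b * (FreeGroup.of a)⁻¹ * (FreeGroup.of b)⁻¹}

/-- The right-angled Artin group defined by the graph `Γ`. -/
abbrev RAAG {V : Type*} (Γ : SimpleGraph V) : Type _ :=
  PresentedGroup (raagRels Γ)

/-- The element of the right-angled Artin group spelled by a word in the
generators and their inverses. -/
def spellRAAG {V : Type*} (Γ : SimpleGraph V) (w : List (V × Bool)) : RAAG Γ :=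
  PresentedGroup.mk (raagRels Γ) (FreeGroup.mk w)

/-- The minimal word length among all elements conjugate to `g`: the least
length of a word in the generators and their inverses spelling an element
conjugate to `g`. -/
noncomputable def minConjWordLength {V : Type*} (Γ : SimpleGraph V) (g : RAAG Γ) : ℕ :=
  sInf {l : ℕ | ∃ w : List (V × Bool), IsConj g (spellRAAG Γ w) ∧ w.length = l}

open scoped Classical

namespace RaagNF

variable {V : Type*}

/-- inverse of a letter -/
def invL (x : V × Bool) : V × Bool := (x.1, !x.2)

@[simp] lemma invL_invL (x : V × Bool) : invL (invL x) = x := by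
  cases x with | mk a b => cases b <;> rfl

@[simp] lemma invL_fst (x : V × Bool) : (invL x).1 = x.1 := rfl

lemma ne_invL (x : V × Bool) : x ≠ invL x := by
  cases x with | mk a b => cases b <;> simp [invL]

/-- one swap of adjacent commuting letters -/
inductive SStep (Γ : SimpleGraph V) : List (V × Bool) → List (V × Bool) → Prop
  | swap (u v : List (V × Bool)) (x y : V × Bool) (h : Γ.Adj x.1 y.1) :
      SStep Γ (u ++ x :: y :: v) (u ++ y :: x :: v)

/-- shuffle equivalence -/
def SEq (Γ : SimpleGraph V) : List (V × Bool) → List (V × Bool) → Prop :=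
  Relation.EqvGen (SStep Γ)

variable {Γ : SimpleGraph V}

lemma SEq.refl (w : List (V × Bool)) : SEq Γ w w := Relation.EqvGen.refl w
lemma SEq.symm {w v} (h : SEq Γ w v) : SEq Γ v w := Relation.EqvGen.symm _ _ h
lemma SEq.trans {w v u} (h : SEq Γ w v) (h' : SEq Γ v u) : SEq Γ w u :=
  Relation.EqvGen.trans _ _ _ h h'
lemma SEq.of_step {w v} (h : SStep Γ w v) : SEq Γ w v := Relation.EqvGen.rel _ _ h

lemma SStep.length {w v} (h : SStep Γ w v) : w.length = v.length := by
  cases h; simp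

lemma SEq.length {w v} (h : SEq Γ w v) : w.length = v.length := by
  induction h with
  | rel _ _ h => exact h.length
  | refl => rfl
  | symm _ _ _ ih => omega
  | trans _ _ _ _ _ ih1 ih2 => omega

lemma SStep.congr {w v} (u r : List (V × Bool)) (h : SStep Γ w v) :
    SStep Γ (u ++ w ++ r) (u ++ v ++ r) := by
  cases h with
  | swap u' v' x y hxy =>
    have e1 : u ++ (u' ++ x :: y :: v') ++ r = (u ++ u') ++ x :: y :: (v' ++ r) := by simp
    have e2 : u ++ (u' ++ y :: x :: v') ++ r = (u ++ u') ++ y :: x :: (v' ++ r) := by simp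
    rw [e1, e2]
    exact SStep.swap _ _ _ _ hxy

lemma SEq.congr {w v} (u r : List (V × Bool)) (h : SEq Γ w v) :
    SEq Γ (u ++ w ++ r) (u ++ v ++ r) := by
  induction h with
  | rel _ _ h => exact SEq.of_step (h.congr u r)
  | refl _ => exact SEq.refl _
  | symm _ _ _ ih => exact ih.symm
  | trans _ _ _ _ _ ih1 ih2 => exact ih1.trans ih2

lemma SEq.cons {w v} (x : V × Bool) (h : SEq Γ w v) : SEq Γ (x :: w) (x :: v) := by
  have := h.congr [x] []
  simpa using this

lemma SEq.append_right {w v} (r : List (V × Bool)) (h : SEq Γ w v) :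
    SEq Γ (w ++ r) (v ++ r) := by
  have := h.congr [] r
  simpa using this

lemma SEq.append_left {w v} (u : List (V × Bool)) (h : SEq Γ w v) :
    SEq Γ (u ++ w) (u ++ v) := by
  have := h.congr u []
  simpa using this

lemma SEq.append {w v w' v'} (h : SEq Γ w v) (h' : SEq Γ w' v') :
    SEq Γ (w ++ w') (v ++ v') :=
  (h.append_right w').trans (h'.append_left v)

/-- a letter adjacent to everything in `m` can be shuffled from front to back -/
lemma shuffle {m : List (V × Bool)} {y : V × Bool}
    (h : ∀ z ∈ m, Γ.Adj y.1 z.1) : SEq Γ (y :: m) (m ++ [y]) := by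
  induction m with
  | nil => exact SEq.refl _
  | cons z m ih =>
    have h1 : SStep Γ ([] ++ y :: z :: m) ([] ++ z :: y :: m) :=
      SStep.swap [] m y z (h z (by simp))
    refine (SEq.of_step (by simpa using h1)).trans ?_
    have : SEq Γ (y :: m) (m ++ [y]) := ih (fun z hz => h z (by simp [hz]))
    simpa using this.cons z

variable {V : Type*}

noncomputable def pfilter (P : V × Bool → Prop) : List (V × Bool) → List (V × Bool)
  | [] => []
  | z :: w => if P z then z :: pfilter P w else pfilter P w

@[simp] lemma pfilter_nil (P : V × Bool → Prop) : pfilter P [] = [] := rfl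
lemma pfilter_cons (P : V × Bool → Prop) (z w) :
    pfilter P (z :: w) = if P z then z :: pfilter P w else pfilter P w := rfl
@[simp] lemma pfilter_cons_pos {P : V × Bool → Prop} {z} (h : P z) (w) :
    pfilter P (z :: w) = z :: pfilter P w := by rw [pfilter_cons, if_pos h]
@[simp] lemma pfilter_cons_neg {P : V × Bool → Prop} {z} (h : ¬ P z) (w) :
    pfilter P (z :: w) = pfilter P w := by rw [pfilter_cons, if_neg h]
lemma pfilter_append (P : V × Bool → Prop) (u v) :
    pfilter P (u ++ v) = pfilter P u ++ pfilter P v := by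
  induction u with
  | nil => rfl
  | cons z u ih =>
    by_cases h : P z
    · simp [pfilter_cons_pos h, ih]
    · simp [pfilter_cons_neg h, ih]
lemma mem_of_mem_pfilter {P : V × Bool → Prop} {z w} (h : z ∈ pfilter P w) : z ∈ w ∧ P z := by
  induction w with
  | nil => simp [pfilter] at h
  | cons y w ih =>
    by_cases hy : P y
    · rw [pfilter_cons_pos hy] at h
      rcases List.mem_cons.1 h with h | h
      · exact ⟨by simp [h], h ▸ hy⟩
      · exact ⟨by simp [(ih h).1], (ih h).2⟩
    · rw [pfilter_cons_neg hy] at h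
      exact ⟨by simp [(ih h).1], (ih h).2⟩
lemma mem_pfilter_of {P : V × Bool → Prop} {z w} (hz : z ∈ w) (hP : P z) : z ∈ pfilter P w := by
  induction w with
  | nil => simp at hz
  | cons y w ih =>
    rcases List.mem_cons.1 hz with rfl | hz
    · rw [pfilter_cons_pos hP]; simp
    · by_cases hy : P y
      · rw [pfilter_cons_pos hy]; exact List.mem_cons_of_mem _ (ih hz)
      · rw [pfilter_cons_neg hy]; exact ih hz

variable {Γ : SimpleGraph V}

/-- non-star filter: keep letters equal to `a` or not adjacent to `a` -/
noncomputable def nsF (Γ : SimpleGraph V) (a : V) : List (V × Bool) → List (V × Bool) :=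
  pfilter (fun z => z.1 = a ∨ ¬ Γ.Adj a z.1)

/-- pair projection -/
noncomputable def prj (a b : V) : List (V × Bool) → List (V × Bool) :=
  pfilter (fun z => z.1 = a ∨ z.1 = b)

lemma pfilter_eq_cons {P : V × Bool → Prop} {w c t} (h : pfilter P w = c :: t) :
    ∃ p q, w = p ++ c :: q ∧ (∀ z ∈ p, ¬ P z) ∧ P c ∧ pfilter P q = t := by
  induction w with
  | nil => simp at h
  | cons y w ih =>
    by_cases hy : P y
    · rw [pfilter_cons_pos hy] at h
      obtain ⟨rfl, rfl⟩ : y = c ∧ pfilter P w = t := by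
        constructor
        · exact (List.cons.injEq _ _ _ _ ▸ h).1
        · exact (List.cons.injEq _ _ _ _ ▸ h).2
      exact ⟨[], w, by simp, by simp, hy, rfl⟩
    · rw [pfilter_cons_neg hy] at h
      obtain ⟨p, q, rfl, hp, hc, hq⟩ := ih h
      exact ⟨y :: p, q, by simp, by
        intro z hz
        rcases List.mem_cons.1 hz with rfl | hz
        · exact hy
        · exact hp z hz, hc, hq⟩

/-- general decomposition: filter = p ++ c :: d :: s gives word decomposition with
the two marked letters consecutive among the P-letters -/
lemma pfilter_eq_pair {P : V × Bool → Prop} {w : List (V × Bool)} {p c d s}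
    (h : pfilter P w = p ++ c :: d :: s) :
    ∃ w₁ m w₂, w = w₁ ++ c :: (m ++ d :: w₂) ∧ (∀ z ∈ m, ¬ P z) ∧ P c ∧ P d := by
  induction w generalizing p with
  | nil => simp at h
  | cons y w ih =>
    by_cases hy : P y
    · rw [pfilter_cons_pos hy] at h
      cases p with
      | nil =>
        simp only [List.nil_append] at h
        obtain ⟨rfl, h2⟩ : y = c ∧ pfilter P w = d :: s := by
          exact ⟨(List.cons.injEq _ _ _ _ ▸ h).1, (List.cons.injEq _ _ _ _ ▸ h).2⟩
        obtain ⟨m, q, rfl, hm, hd, _⟩ := pfilter_eq_cons h2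
        exact ⟨[], m, q, by simp, hm, hy, hd⟩
      | cons e p' =>
        simp only [List.cons_append] at h
        obtain ⟨rfl, h2⟩ : y = e ∧ pfilter P w = p' ++ c :: d :: s := by
          exact ⟨(List.cons.injEq _ _ _ _ ▸ h).1, (List.cons.injEq _ _ _ _ ▸ h).2⟩
        obtain ⟨w₁, m, w₂, rfl, hm, hc, hd⟩ := ih h2
        exact ⟨y :: w₁, m, w₂, by simp, hm, hc, hd⟩
    · rw [pfilter_cons_neg hy] at h
      obtain ⟨w₁, m, w₂, rfl, hm, hc, hd⟩ := ih h
      exact ⟨y :: w₁, m, w₂, by simp, hm, hc, hd⟩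


lemma SStep.symm' {w v} (h : SStep Γ w v) : SStep Γ v w := by
  cases h with
  | swap u v x y hxy => exact SStep.swap u v y x hxy.symm

@[simp] lemma nsF_nil (a : V) : nsF Γ a [] = [] := rfl
lemma nsF_cons_pos {a : V} {z : V × Bool} (h : z.1 = a ∨ ¬ Γ.Adj a z.1) (w) :
    nsF Γ a (z :: w) = z :: nsF Γ a w := pfilter_cons_pos h w
lemma nsF_cons_neg {a : V} {z : V × Bool} (h : ¬(z.1 = a ∨ ¬ Γ.Adj a z.1)) (w) :
    nsF Γ a (z :: w) = nsF Γ a w := pfilter_cons_neg h w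
lemma nsF_append (a : V) (u v) : nsF Γ a (u ++ v) = nsF Γ a u ++ nsF Γ a v :=
  pfilter_append _ u v

@[simp] lemma prj_nil (a b : V) : prj a b ([] : List (V × Bool)) = [] := rfl
lemma prj_cons_pos {a b : V} {z : V × Bool} (h : z.1 = a ∨ z.1 = b) (w) :
    prj a b (z :: w) = z :: prj a b w := pfilter_cons_pos h w
lemma prj_cons_neg {a b : V} {z : V × Bool} (h : ¬(z.1 = a ∨ z.1 = b)) (w) :
    prj a b (z :: w) = prj a b w := pfilter_cons_neg h w
lemma prj_append (a b : V) (u v) : prj a b (u ++ v) = prj a b u ++ prj a b v :=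
  pfilter_append _ u v

/-- effect of a single swap on the non-star filter -/
lemma nsF_sstep {w v} (h : SStep Γ w v) (a : V) :
    nsF Γ a w = nsF Γ a v ∨
    ∃ u X Y r, X.1 ≠ a ∧ Y.1 ≠ a ∧ nsF Γ a w = u ++ X :: Y :: r ∧
      nsF Γ a v = u ++ Y :: X :: r := by
  cases h with
  | swap u0 v0 x y hxy =>
    by_cases hx : (x.1 = a ∨ ¬ Γ.Adj a x.1) <;> by_cases hy : (y.1 = a ∨ ¬ Γ.Adj a y.1)
    · right
      have hxa : x.1 ≠ a := by
        rintro e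
        have hay : Γ.Adj a y.1 := e ▸ hxy
        rcases hy with h1 | h1
        · exact Γ.irrefl (h1 ▸ hay)
        · exact h1 hay
      have hya : y.1 ≠ a := by
        rintro e
        have hax : Γ.Adj a x.1 := e ▸ hxy.symm
        rcases hx with h1 | h1
        · exact Γ.irrefl (h1 ▸ hax)
        · exact h1 hax
      refine ⟨nsF Γ a u0, x, y, nsF Γ a v0, hxa, hya, ?_, ?_⟩ <;>
        simp [nsF_append, nsF_cons_pos hx, nsF_cons_pos hy]
    · left
      simp [nsF_append, nsF_cons_pos hx, nsF_cons_neg hy]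
    · left
      simp [nsF_append, nsF_cons_pos hy, nsF_cons_neg hx]
    · left
      simp [nsF_append, nsF_cons_neg hx, nsF_cons_neg hy]

/-- transposing two non-`a` letters preserves having a consecutive cancelling `a`-pair -/
lemma pair_swap {a : V} {X Y x : V × Bool} (hX : X.1 ≠ a) (hY : Y.1 ≠ a) (hx : x.1 = a) :
    ∀ (u p r s : List (V × Bool)),
      u ++ X :: Y :: r = p ++ x :: invL x :: s →
      ∃ p' s', u ++ Y :: X :: r = p' ++ x :: invL x :: s' := by
  intro u
  induction u with
  | nil =>
    intro p r s h
    cases p with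
    | nil =>
      simp only [List.nil_append] at h
      injection h with h1 _
      exact absurd (h1 ▸ hx) hX
    | cons e p' =>
      cases p' with
      | nil =>
        simp only [List.nil_append, List.cons_append] at h
        injection h with h1 h2
        injection h2 with h2 _
        exact absurd (h2 ▸ hx) hY
      | cons f p'' =>
        simp only [List.nil_append, List.cons_append] at h
        injection h with h1 h2
        injection h2 with h2 h3
        exact ⟨Y :: X :: p'', s, by simp [h3]⟩
  | cons c u' ih =>
    intro p r s h
    cases p with
    | nil =>
      simp only [List.nil_append, List.cons_append] at h
      injection h with h1 h2
      cases u' with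
      | nil =>
        simp only [List.nil_append] at h2
        injection h2 with h2 _
        exact absurd (by rw [h2]; simp [hx]) hX
      | cons d u'' =>
        simp only [List.cons_append] at h2
        injection h2 with h2 h3
        exact ⟨[], u'' ++ Y :: X :: r, by simp [h1, h2]⟩
    | cons e p' =>
      simp only [List.cons_append] at h
      injection h with h1 h2
      obtain ⟨p'', s'', hres⟩ := ih p' r s h2
      exact ⟨e :: p'', s'', by simp [h1, hres]⟩

/-- a word has a (linear) cancellation pattern -/
def Pat (Γ : SimpleGraph V) (w : List (V × Bool)) : Prop :=
  ∃ (x : V × Bool) (p s : List (V × Bool)), nsF Γ x.1 w = p ++ x :: invL x :: s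

lemma Pat.of_sstep {w v} (h : SStep Γ w v) : Pat Γ w → Pat Γ v := by
  rintro ⟨x, p, s, hps⟩
  rcases nsF_sstep h x.1 with he | ⟨u, X, Y, r, hX, hY, hw, hv⟩
  · exact ⟨x, p, s, he ▸ hps⟩
  · rw [hw] at hps
    obtain ⟨p', s', h'⟩ := pair_swap hX hY rfl u p r s hps
    exact ⟨x, p', s', by rw [hv, h']⟩

lemma Pat.seq_iff {w v} (h : SEq Γ w v) : Pat Γ w ↔ Pat Γ v := by
  induction h with
  | rel _ _ h => exact ⟨Pat.of_sstep h, Pat.of_sstep h.symm'⟩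
  | refl _ => exact Iff.rfl
  | symm _ _ _ ih => exact ih.symm
  | trans _ _ _ _ _ ih1 ih2 => exact ih1.trans ih2

/-- pair projections are invariant for non-adjacent (or equal) pairs -/
lemma prj_sstep {a b : V} (hab : ¬ Γ.Adj a b) {w v} (h : SStep Γ w v) :
    prj a b w = prj a b v := by
  cases h with
  | swap u0 v0 x y hxy =>
    have hnot : ¬((x.1 = a ∨ x.1 = b) ∧ (y.1 = a ∨ y.1 = b)) := by
      rintro ⟨hx, hy⟩
      have hne : x.1 ≠ y.1 := fun e => Γ.irrefl (e ▸ hxy)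
      rcases hx with h1 | h1 <;> rcases hy with h2 | h2
      · exact hne (h1.trans h2.symm)
      · exact hab (h1 ▸ h2 ▸ hxy)
      · exact hab (Γ.adj_symm (h1 ▸ h2 ▸ hxy))
      · exact hne (h1.trans h2.symm)
    by_cases hx : (x.1 = a ∨ x.1 = b) <;> by_cases hy : (y.1 = a ∨ y.1 = b)
    · exact absurd ⟨hx, hy⟩ hnot
    · simp [prj_append, prj_cons_pos hx, prj_cons_neg hy]
    · simp [prj_append, prj_cons_pos hy, prj_cons_neg hx]
    · simp [prj_append, prj_cons_neg hx, prj_cons_neg hy]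

lemma prj_seq {a b : V} (hab : ¬ Γ.Adj a b) {w v} (h : SEq Γ w v) :
    prj a b w = prj a b v := by
  induction h with
  | rel _ _ h => exact prj_sstep hab h
  | refl _ => rfl
  | symm _ _ _ ih => exact ih.symm
  | trans _ _ _ _ _ ih1 ih2 => exact ih1.trans ih2

/-- words with the same pair projections are shuffle equivalent -/
lemma seq_of_prj : ∀ {w v : List (V × Bool)},
    (∀ a b, ¬ Γ.Adj a b → prj a b w = prj a b v) → SEq Γ w v := by
  intro w
  induction w with
  | nil =>
    intro v h
    cases v with
    | nil => exact SEq.refl _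
    | cons y v' =>
      exfalso
      have := h y.1 y.1 (Γ.irrefl)
      rw [prj_nil, prj_cons_pos (Or.inl rfl)] at this
      exact absurd this (List.cons_ne_nil _ _).symm
  | cons x w' ih =>
    intro v h
    have hxx := h x.1 x.1 Γ.irrefl
    rw [prj_cons_pos (Or.inl rfl)] at hxx
    obtain ⟨p, q, rfl, hp, -, -⟩ := pfilter_eq_cons hxx.symm
    have hpa : ∀ z ∈ p, z.1 ≠ x.1 := by
      intro z hz e
      exact hp z hz (Or.inl e)
    have hpadj : ∀ z ∈ p, Γ.Adj x.1 z.1 := by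
      intro z hz
      by_contra hna
      have h2 := h x.1 z.1 hna
      rw [prj_cons_pos (Or.inl rfl), prj_append] at h2
      cases hc : prj x.1 z.1 p with
      | nil =>
        exact absurd (by rw [← hc]; exact mem_pfilter_of hz (Or.inr rfl)) (List.not_mem_nil (a := z))
      | cons c rest =>
        have hcmem : c ∈ p ∧ (c.1 = x.1 ∨ c.1 = z.1) :=
          mem_of_mem_pfilter (hc ▸ List.mem_cons_self (a := c) (l := rest))
        rw [hc] at h2
        simp only [List.cons_append] at h2
        injection h2 with h21 _
        rcases hcmem.2 with hcc | hcc
        · exact hpa c hcmem.1 hcc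
        · rw [← h21] at hcc
          exact hpa z hz hcc.symm
    have hshuf : SEq Γ (p ++ x :: q) (x :: (p ++ q)) := by
      have h1 : SEq Γ (x :: p) (p ++ [x]) := shuffle hpadj
      have h2 := h1.symm.append_right q
      simpa using h2
    have hproj : ∀ a b, ¬ Γ.Adj a b → prj a b w' = prj a b (p ++ q) := by
      intro a b hab
      have h2 := h a b hab
      rw [prj_seq hab hshuf] at h2
      by_cases hx : (x.1 = a ∨ x.1 = b)
      · rw [prj_cons_pos hx, prj_cons_pos hx] at h2
        injection h2
      · rw [prj_cons_neg hx, prj_cons_neg hx] at h2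
        exact h2
    exact ((ih hproj).cons x).trans hshuf.symm

/-- left cancellation for shuffle equivalence -/
lemma seq_cancel {z : V × Bool} {s s'} (h : SEq Γ (z :: s) (z :: s')) : SEq Γ s s' := by
  apply seq_of_prj
  intro a b hab
  have h2 := prj_seq hab h
  by_cases hz : (z.1 = a ∨ z.1 = b)
  · rw [prj_cons_pos hz, prj_cons_pos hz] at h2
    injection h2
  · rw [prj_cons_neg hz, prj_cons_neg hz] at h2
    exact h2


/-! ### Group-side lemmas -/

variable (Γ)

lemma spell_append (u v : List (V × Bool)) :
    spellRAAG Γ (u ++ v) = spellRAAG Γ u * spellRAAG Γ v := by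
  unfold spellRAAG
  rw [← map_mul, FreeGroup.mul_mk]

lemma spell_nil : spellRAAG Γ ([] : List (V × Bool)) = 1 := by
  unfold spellRAAG
  rw [← FreeGroup.one_eq_mk, map_one]

lemma spell_invRev (w : List (V × Bool)) :
    spellRAAG Γ (FreeGroup.invRev w) = (spellRAAG Γ w)⁻¹ := by
  unfold spellRAAG
  rw [← FreeGroup.inv_mk, map_inv]

lemma spell_single_inv (x : V × Bool) :
    spellRAAG Γ [invL x] = (spellRAAG Γ [x])⁻¹ := by
  have h : FreeGroup.invRev [x] = [invL x] := by
    simp [FreeGroup.invRev, invL]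
  rw [← h, spell_invRev]

lemma spell_rel_one {r : FreeGroup V} (h : r ∈ raagRels Γ) :
    PresentedGroup.mk (raagRels Γ) r = 1 :=
  (QuotientGroup.eq_one_iff r).2 (Subgroup.subset_normalClosure h)

variable {Γ}

open scoped commutatorElement in
lemma spell_gen_comm {a b : V} (h : Γ.Adj a b) :
    Commute (spellRAAG Γ [(a, true)]) (spellRAAG Γ [(b, true)]) := by
  have h1 : PresentedGroup.mk (raagRels Γ)
      (FreeGroup.of a * FreeGroup.of b * (FreeGroup.of a)⁻¹ * (FreeGroup.of b)⁻¹) = 1 :=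
    spell_rel_one Γ ⟨a, b, h, rfl⟩
  have h2 : ⁅spellRAAG Γ [(a, true)], spellRAAG Γ [(b, true)]⁆ = 1 := by
    rw [commutatorElement_def]
    rw [map_mul, map_mul, map_mul, map_inv, map_inv] at h1; exact h1
  exact commutatorElement_eq_one_iff_commute.1 h2

lemma spell_letter_comm {x y : V × Bool} (h : Γ.Adj x.1 y.1) :
    Commute (spellRAAG Γ [x]) (spellRAAG Γ [y]) := by
  obtain ⟨a, ba⟩ := x
  obtain ⟨b, bb⟩ := y
  have base : Commute (spellRAAG Γ [(a, true)]) (spellRAAG Γ [(b, true)]) :=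
    spell_gen_comm h
  have ea : spellRAAG Γ [(a, false)] = (spellRAAG Γ [(a, true)])⁻¹ :=
    spell_single_inv Γ (a, true)
  have eb : spellRAAG Γ [(b, false)] = (spellRAAG Γ [(b, true)])⁻¹ :=
    spell_single_inv Γ (b, true)
  cases ba <;> cases bb <;>
    (try simp only [ea, eb]) <;>
    first
      | exact base
      | exact base.inv_left
      | exact base.inv_right
      | exact base.inv_left.inv_right

lemma spell_comm_list {x : V × Bool} {m : List (V × Bool)}
    (h : ∀ z ∈ m, Γ.Adj x.1 z.1) :
    Commute (spellRAAG Γ [x]) (spellRAAG Γ m) := by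
  induction m with
  | nil => rw [spell_nil]; exact Commute.one_right _
  | cons z m ih =>
    have : spellRAAG Γ (z :: m) = spellRAAG Γ [z] * spellRAAG Γ m :=
      spell_append Γ [z] m
    rw [this]
    exact (spell_letter_comm (h z (by simp))).mul_right (ih fun z hz => h z (by simp [hz]))

lemma spell_reduce {x : V × Bool} {m : List (V × Bool)}
    (h : ∀ z ∈ m, Γ.Adj x.1 z.1) (p s : List (V × Bool)) :
    spellRAAG Γ (p ++ x :: (m ++ invL x :: s)) = spellRAAG Γ (p ++ m ++ s) := by
  have e1 : p ++ x :: (m ++ invL x :: s) = p ++ [x] ++ m ++ [invL x] ++ s := by simp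
  rw [e1, spell_append Γ (p ++ [x] ++ m ++ [invL x]) s, spell_append Γ (p ++ [x] ++ m) [invL x],
    spell_append Γ (p ++ [x]) m, spell_append Γ p [x],
    spell_append Γ (p ++ m) s, spell_append Γ p m, spell_single_inv]
  have hc : spellRAAG Γ [x] * spellRAAG Γ m = spellRAAG Γ m * spellRAAG Γ [x] :=
    (spell_comm_list h).eq
  rw [mul_assoc (spellRAAG Γ p), hc]
  group

lemma spell_sstep {w v : List (V × Bool)} (h : SStep Γ w v) :
    spellRAAG Γ w = spellRAAG Γ v := by
  cases h with
  | swap u r x y hxy =>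
    have e1 : u ++ x :: y :: r = u ++ [x] ++ [y] ++ r := by simp
    have e2 : u ++ y :: x :: r = u ++ [y] ++ [x] ++ r := by simp
    rw [e1, e2]
    rw [spell_append, spell_append, spell_append, spell_append, spell_append, spell_append]
    rw [mul_assoc (spellRAAG Γ u), (spell_letter_comm hxy).eq]
    group

lemma spell_seq {w v : List (V × Bool)} (h : SEq Γ w v) :
    spellRAAG Γ w = spellRAAG Γ v := by
  induction h with
  | rel _ _ h => exact spell_sstep h
  | refl _ => rfl
  | symm _ _ _ ih => exact ih.symm
  | trans _ _ _ _ _ ih1 ih2 => exact ih1.trans ih2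

/-! ### Cancellation condition -/

/-- `Canc Γ x w` : the word `w` can be shuffled to begin with `invL x`. -/
def Canc (Γ : SimpleGraph V) (x : V × Bool) (w : List (V × Bool)) : Prop :=
  ∃ s, SEq Γ w (invL x :: s)

lemma canc_seq {x : V × Bool} {w v} (h : SEq Γ w v) : Canc Γ x w ↔ Canc Γ x v :=
  ⟨fun ⟨s, hs⟩ => ⟨s, h.symm.trans hs⟩, fun ⟨s, hs⟩ => ⟨s, h.trans hs⟩⟩

lemma head_nsF_seq (x : V × Bool) {w v} (h : SEq Γ w v) :
    ((nsF Γ x.1 w).head? = some (invL x)) ↔ ((nsF Γ x.1 v).head? = some (invL x)) := by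
  induction h with
  | rel a b h =>
    rcases nsF_sstep h x.1 with he | ⟨u, X, Y, r, hX, hY, hw, hv⟩
    · rw [he]
    · rw [hw, hv]
      cases u with
      | nil =>
        simp only [List.nil_append, List.head?_cons]
        constructor
        · intro hh
          exact absurd (by rw [Option.some.inj hh]; simp) hX
        · intro hh
          exact absurd (by rw [Option.some.inj hh]; simp) hY
      | cons c u' => exact Iff.rfl
  | refl _ => exact Iff.rfl
  | symm _ _ _ ih => exact ih.symm
  | trans _ _ _ _ _ ih1 ih2 => exact ih1.trans ih2

lemma canc_iff_head {x : V × Bool} {w : List (V × Bool)} :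
    Canc Γ x w ↔ (nsF Γ x.1 w).head? = some (invL x) := by
  constructor
  · rintro ⟨s, hs⟩
    rw [head_nsF_seq x hs]
    rw [nsF_cons_pos (Or.inl (invL_fst x))]
    simp
  · intro h
    induction w with
    | nil => simp [nsF_nil] at h
    | cons z w' ih =>
      by_cases hz : (z.1 = x.1 ∨ ¬ Γ.Adj x.1 z.1)
      · rw [nsF_cons_pos hz] at h
        simp only [List.head?_cons, Option.some.injEq] at h
        exact ⟨w', h ▸ SEq.refl _⟩
      · push_neg at hz
        rw [nsF_cons_neg (by push_neg; exact hz)] at h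
        obtain ⟨s, hs⟩ := ih h
        refine ⟨z :: s, (hs.cons z).trans ?_⟩
        have : SStep Γ ([] ++ z :: invL x :: s) ([] ++ invL x :: z :: s) :=
          SStep.swap [] s z (invL x) (by simpa using hz.2.symm)
        exact SEq.of_step (by simpa using this)

lemma canc_cons_adj {x z : V × Bool} {w} (hadj : Γ.Adj x.1 z.1) :
    Canc Γ x (z :: w) ↔ Canc Γ x w := by
  rw [canc_iff_head, canc_iff_head]
  have hne : z.1 ≠ x.1 := fun e => Γ.irrefl (e ▸ hadj)
  rw [nsF_cons_neg (by push_neg; exact ⟨hne, hadj⟩)]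

/-! ### Reduced words -/

lemma pat_nil : ¬ Pat Γ [] := by
  rintro ⟨x, p, s, h⟩
  rw [nsF_nil] at h
  exact absurd h.symm (List.append_ne_nil_of_right_ne_nil _ (by simp))

lemma pat_cons (x : V × Bool) {w} (h : Pat Γ w) : Pat Γ (x :: w) := by
  obtain ⟨x₀, p, s, h⟩ := h
  by_cases hx : (x.1 = x₀.1 ∨ ¬ Γ.Adj x₀.1 x.1)
  · exact ⟨x₀, x :: p, s, by rw [nsF_cons_pos hx, h, List.cons_append]⟩
  · exact ⟨x₀, p, s, by rw [nsF_cons_neg hx, h]⟩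

lemma red_tail {x : V × Bool} {w} (h : ¬ Pat Γ (x :: w)) : ¬ Pat Γ w :=
  fun hp => h (pat_cons x hp)

lemma pat_cancel_pair (x : V × Bool) (w : List (V × Bool)) : Pat Γ (x :: invL x :: w) :=
  ⟨x, [], nsF Γ x.1 w, by
    rw [nsF_cons_pos (Or.inl rfl), nsF_cons_pos (Or.inl (invL_fst x))]
    simp⟩

lemma red_cons {x : V × Bool} {w} (hw : ¬ Pat Γ w) (hc : ¬ Canc Γ x w) :
    ¬ Pat Γ (x :: w) := by
  rintro ⟨x₀, p, s, h⟩
  by_cases hx : (x.1 = x₀.1 ∨ ¬ Γ.Adj x₀.1 x.1)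
  · rw [nsF_cons_pos hx] at h
    cases p with
    | nil =>
      simp only [List.nil_append] at h
      injection h with h1 h2
      apply hc
      rw [canc_iff_head]
      rw [← h1] at h2
      rw [h2]
      simp
    | cons e p' =>
      simp only [List.cons_append] at h
      injection h with _ h2
      exact hw ⟨x₀, p', s, h2⟩
  · rw [nsF_cons_neg hx] at h
    exact hw ⟨x₀, p, s, h⟩

/-- cancelling a pattern shortens the word without changing the group element -/
lemma pat_shorten {w : List (V × Bool)} (h : Pat Γ w) :
    ∃ v, spellRAAG Γ v = spellRAAG Γ w ∧ v.length + 2 = w.length := by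
  obtain ⟨x, p, s, h⟩ := h
  obtain ⟨w₁, m, w₂, rfl, hm, -, -⟩ := pfilter_eq_pair h
  have hmadj : ∀ z ∈ m, Γ.Adj x.1 z.1 := by
    intro z hz
    have := hm z hz
    push_neg at this
    exact this.2
  refine ⟨w₁ ++ m ++ w₂, (spell_reduce hmadj w₁ w₂).symm, by simp; omega⟩

/-! ### The action on reduced heaps -/

/-- the action of a letter on a word: cancel if possible, otherwise prepend -/
noncomputable def actW (Γ : SimpleGraph V) (x : V × Bool) (w : List (V × Bool)) :
    List (V × Bool) :=
  if h : Canc Γ x w then Classical.choose h else x :: w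

lemma actW_canc {x : V × Bool} {w} (h : Canc Γ x w) :
    SEq Γ w (invL x :: actW Γ x w) := by
  rw [actW, dif_pos h]
  exact Classical.choose_spec h

lemma actW_ncanc {x : V × Bool} {w} (h : ¬ Canc Γ x w) : actW Γ x w = x :: w := by
  rw [actW, dif_neg h]

lemma red_actW {x : V × Bool} {w} (hw : ¬ Pat Γ w) : ¬ Pat Γ (actW Γ x w) := by
  by_cases h : Canc Γ x w
  · have hs := actW_canc h
    have : ¬ Pat Γ (invL x :: actW Γ x w) := fun hp => hw ((Pat.seq_iff hs).2 hp)
    exact red_tail this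
  · rw [actW_ncanc h]
    exact red_cons hw h

lemma actW_seq {x : V × Bool} {w v} (h : SEq Γ w v) :
    SEq Γ (actW Γ x w) (actW Γ x v) := by
  by_cases hc : Canc Γ x w
  · have hcv : Canc Γ x v := (canc_seq h).1 hc
    have h1 := actW_canc hc
    have h2 := actW_canc hcv
    exact seq_cancel ((h1.symm.trans h).trans h2)
  · have hcv : ¬ Canc Γ x v := fun hv => hc ((canc_seq h).2 hv)
    rw [actW_ncanc hc, actW_ncanc hcv]
    exact h.cons x

lemma actW_inv {x : V × Bool} {w} (hw : ¬ Pat Γ w) :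
    SEq Γ (actW Γ (invL x) (actW Γ x w)) w := by
  by_cases hc : Canc Γ x w
  · have hs := actW_canc hc
    set s := actW Γ x w with hsdef
    have hnc : ¬ Canc Γ (invL x) s := by
      rintro ⟨t, ht⟩
      rw [invL_invL] at ht
      have : SEq Γ w (invL x :: x :: t) := hs.trans (ht.cons (invL x))
      have hp : Pat Γ (invL x :: x :: t) := by
        have h' := pat_cancel_pair (Γ := Γ) (invL x) t
        rwa [invL_invL] at h'
      exact hw ((Pat.seq_iff this).2 hp)
    rw [actW_ncanc hnc]
    exact hs.symm
  · rw [actW_ncanc hc]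
    have hcx : Canc Γ (invL x) (x :: w) := ⟨w, by rw [invL_invL]; exact SEq.refl _⟩
    have h1 := actW_canc hcx
    rw [invL_invL] at h1
    exact (seq_cancel h1).symm

lemma actW_comm_aux {x y : V × Bool} {w} (hxy : Γ.Adj x.1 y.1)
    (hcy : Canc Γ y w) (hcx : ¬ Canc Γ x w) :
    SEq Γ (actW Γ x (actW Γ y w)) (actW Γ y (actW Γ x w)) := by
  have hsy := actW_canc hcy
  set sy := actW Γ y w with hsydef
  have hcxsy : ¬ Canc Γ x sy := by
    intro hcs
    apply hcx
    rw [canc_seq hsy, canc_cons_adj (by simpa using hxy)]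
    exact hcs
  rw [actW_ncanc hcxsy, actW_ncanc hcx]
  have hcyx : Canc Γ y (x :: w) := by
    rw [canc_cons_adj hxy.symm]
    exact hcy
  have ht := actW_canc hcyx
  set t := actW Γ y (x :: w) with htdef
  have h1 : SEq Γ (x :: w) (invL y :: x :: sy) := by
    refine ((hsy.cons x).trans ?_)
    have : SStep Γ ([] ++ x :: invL y :: sy) ([] ++ invL y :: x :: sy) :=
      SStep.swap [] sy x (invL y) (by simpa using hxy)
    exact SEq.of_step (by simpa using this)
  exact (seq_cancel (ht.symm.trans h1)).symm

lemma actW_comm {x y : V × Bool} {w} (hxy : Γ.Adj x.1 y.1) :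
    SEq Γ (actW Γ x (actW Γ y w)) (actW Γ y (actW Γ x w)) := by
  by_cases hcx : Canc Γ x w <;> by_cases hcy : Canc Γ y w
  · -- both cancel
    have hsx := actW_canc hcx
    have hsy := actW_canc hcy
    set sx := actW Γ x w
    set sy := actW Γ y w
    have hcxsy : Canc Γ x sy := by
      have := (canc_seq hsy).1 hcx
      rwa [canc_cons_adj (by simpa using hxy)] at this
    have hcysx : Canc Γ y sx := by
      have := (canc_seq hsx).1 hcy
      rwa [canc_cons_adj (by simpa using hxy.symm)] at this
    have ht1 := actW_canc hcxsy
    have ht2 := actW_canc hcysx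
    set t1 := actW Γ x sy
    set t2 := actW Γ y sx
    have e1 : SEq Γ w (invL x :: invL y :: t1) := by
      refine (hsy.trans ((ht1.cons (invL y)).trans ?_))
      have : SStep Γ ([] ++ invL y :: invL x :: t1) ([] ++ invL x :: invL y :: t1) :=
        SStep.swap [] t1 (invL y) (invL x) (by simpa using hxy.symm)
      exact SEq.of_step (by simpa using this)
    have e2 : SEq Γ w (invL x :: invL y :: t2) :=
      hsx.trans (ht2.cons (invL x))
    exact seq_cancel (seq_cancel (e1.symm.trans e2))
  · exact (actW_comm_aux hxy.symm hcx hcy).symm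
  · exact actW_comm_aux hxy hcy hcx
  · have h1 : ¬ Canc Γ x (actW Γ y w) := by
      rw [actW_ncanc hcy, canc_cons_adj hxy]
      exact hcx
    have h2 : ¬ Canc Γ y (actW Γ x w) := by
      rw [actW_ncanc hcx, canc_cons_adj hxy.symm]
      exact hcy
    rw [actW_ncanc h1, actW_ncanc h2, actW_ncanc hcx, actW_ncanc hcy]
    have : SStep Γ ([] ++ x :: y :: w) ([] ++ y :: x :: w) :=
      SStep.swap [] w x y hxy
    exact SEq.of_step (by simpa using this)


/-! ### The quotient of words by shuffles, and the permutation action -/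

def WS (Γ : SimpleGraph V) : Setoid (List (V × Bool)) := Relation.EqvGen.setoid (SStep Γ)

def RedQ (Γ : SimpleGraph V) : Quotient (WS Γ) → Prop :=
  Quotient.lift (fun w => ¬ Pat Γ w) (fun _ _ h => propext (not_congr (Pat.seq_iff h)))

def RSp (Γ : SimpleGraph V) := {q : Quotient (WS Γ) // RedQ Γ q}

noncomputable def actQ (Γ : SimpleGraph V) (x : V × Bool) :
    Quotient (WS Γ) → Quotient (WS Γ) :=
  Quotient.lift (fun w => Quotient.mk (WS Γ) (actW Γ x w))
    (fun _ _ h => Quotient.sound (actW_seq h))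

lemma actQ_mk (x : V × Bool) (w : List (V × Bool)) :
    actQ Γ x (Quotient.mk (WS Γ) w) = Quotient.mk (WS Γ) (actW Γ x w) := rfl

lemma actQ_red (x : V × Bool) {q} (h : RedQ Γ q) : RedQ Γ (actQ Γ x q) := by
  induction q using Quotient.ind with
  | _ w => exact red_actW h

noncomputable def actR (Γ : SimpleGraph V) (x : V × Bool) : RSp Γ → RSp Γ :=
  fun q => ⟨actQ Γ x q.1, actQ_red x q.2⟩

lemma actR_inv (x : V × Bool) : ∀ q : RSp Γ, actR Γ (invL x) (actR Γ x q) = q := by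
  rintro ⟨q, hq⟩
  induction q using Quotient.ind with
  | _ w =>
    apply Subtype.ext
    exact Quotient.sound (actW_inv (x := x) hq)

noncomputable def permL (Γ : SimpleGraph V) (x : V × Bool) : Equiv.Perm (RSp Γ) where
  toFun := actR Γ x
  invFun := actR Γ (invL x)
  left_inv := fun q => actR_inv x q
  right_inv := fun q => by
    have h := actR_inv (Γ := Γ) (invL x) q
    rwa [invL_invL] at h

lemma permL_inv (x : V × Bool) : (permL Γ x)⁻¹ = permL Γ (invL x) :=
  Equiv.ext fun _ => rfl

lemma permL_comm {x y : V × Bool} (h : Γ.Adj x.1 y.1) :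
    permL Γ x * permL Γ y = permL Γ y * permL Γ x := by
  apply Equiv.ext
  rintro ⟨q, hq⟩
  induction q using Quotient.ind with
  | _ w =>
    change permL Γ x (permL Γ y ⟨Quotient.mk _ w, hq⟩) = permL Γ y (permL Γ x ⟨Quotient.mk _ w, hq⟩)
    exact Subtype.ext (Quotient.sound (actW_comm h))

/-- The homomorphism from the RAAG to permutations of reduced heaps. -/
noncomputable def Phi (Γ : SimpleGraph V) : RAAG Γ →* Equiv.Perm (RSp Γ) :=
  PresentedGroup.toGroup (f := fun a => permL Γ (a, true)) (by
    rintro r ⟨a, b, hab, rfl⟩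
    simp only [map_mul, map_inv, FreeGroup.lift_apply_of]
    rw [permL_comm (Γ := Γ) (x := (a, true)) (y := (b, true)) hab]
    group)

lemma Phi_spell_single (x : V × Bool) : Phi Γ (spellRAAG Γ [x]) = permL Γ x := by
  obtain ⟨a, b⟩ := x
  cases b
  · have e : spellRAAG Γ [(a, false)] = (spellRAAG Γ [(a, true)])⁻¹ :=
      spell_single_inv Γ (a, true)
    rw [e, map_inv]
    have ht : Phi Γ (spellRAAG Γ [(a, true)]) = permL Γ (a, true) :=
      PresentedGroup.toGroup.of _
    rw [ht, permL_inv]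
    rfl
  · exact PresentedGroup.toGroup.of _

def emptyR (Γ : SimpleGraph V) : RSp Γ := ⟨Quotient.mk (WS Γ) [], pat_nil⟩

lemma Phi_eval {w : List (V × Bool)} (hw : ¬ Pat Γ w) :
    (Phi Γ (spellRAAG Γ w)) (emptyR Γ) = ⟨Quotient.mk (WS Γ) w, hw⟩ := by
  induction w with
  | nil =>
    rw [spell_nil, map_one]
    rfl
  | cons x w' ih =>
    have hw' : ¬ Pat Γ w' := red_tail hw
    have hnc : ¬ Canc Γ x w' := by
      rintro ⟨s, hs⟩
      exact hw ((Pat.seq_iff (hs.cons x)).2 (pat_cancel_pair (Γ := Γ) x s))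
    have e : spellRAAG Γ (x :: w') = spellRAAG Γ [x] * spellRAAG Γ w' := spell_append Γ [x] w'
    rw [e, map_mul]
    rw [Equiv.Perm.mul_apply, ih hw', Phi_spell_single]
    apply Subtype.ext
    show actQ Γ x (Quotient.mk (WS Γ) w') = Quotient.mk (WS Γ) (x :: w')
    rw [actQ_mk, actW_ncanc hnc]

/-- Normal form: two reduced words spelling the same element are shuffle equivalent. -/
lemma seq_of_spell_eq {w v : List (V × Bool)} (hw : ¬ Pat Γ w) (hv : ¬ Pat Γ v)
    (h : spellRAAG Γ w = spellRAAG Γ v) : SEq Γ w v := by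
  have h2 := congrArg (fun g => (Phi Γ g) (emptyR Γ)) h
  rw [Phi_eval hw, Phi_eval hv] at h2
  exact Quotient.exact (congrArg Subtype.val h2)

/-! ### Reduction and geodesics -/

lemma reduce_word (Γ : SimpleGraph V) (v : List (V × Bool)) :
    ∃ v', ¬ Pat Γ v' ∧ spellRAAG Γ v' = spellRAAG Γ v ∧ v'.length ≤ v.length := by
  suffices H : ∀ (n : ℕ) (v : List (V × Bool)), v.length ≤ n →
      ∃ v', ¬ Pat Γ v' ∧ spellRAAG Γ v' = spellRAAG Γ v ∧ v'.length ≤ v.length from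
    H v.length v le_rfl
  intro n
  induction n with
  | zero =>
    intro v hv
    have : v = [] := List.length_eq_zero_iff.1 (by omega)
    subst this
    exact ⟨[], pat_nil, rfl, le_rfl⟩
  | succ n ih =>
    intro v hv
    by_cases hp : Pat Γ v
    · obtain ⟨v₂, hsp, hlen⟩ := pat_shorten hp
      obtain ⟨v', h1, h2, h3⟩ := ih v₂ (by omega)
      exact ⟨v', h1, h2.trans hsp, by omega⟩
    · exact ⟨v, hp, rfl, le_rfl⟩

lemma red_geodesic {r v : List (V × Bool)} (hr : ¬ Pat Γ r)
    (h : spellRAAG Γ v = spellRAAG Γ r) : r.length ≤ v.length := by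
  obtain ⟨v', h1, h2, h3⟩ := reduce_word Γ v
  have hseq := seq_of_spell_eq h1 hr (h2.trans h)
  have := hseq.length
  omega


/-! ### Periodic words -/

lemma append_eq_append_of_le {A B C D : List (V × Bool)} (h : A ++ B = C ++ D)
    (hl : C.length ≤ A.length) : ∃ E, A = C ++ E ∧ D = E ++ B := by
  refine ⟨A.drop C.length, ?_, ?_⟩
  · have h1 : (A ++ B).take C.length = (C ++ D).take C.length := by rw [h]
    rw [List.take_append_of_le_length hl, List.take_append_of_le_length le_rfl,
      List.take_length] at h1
    conv_lhs => rw [← List.take_append_drop C.length A]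
    rw [h1]
  · have h2 : (A ++ B).drop C.length = (C ++ D).drop C.length := by rw [h]
    rw [List.drop_append_of_le_length hl, List.drop_append_of_le_length le_rfl,
      List.drop_length, List.nil_append] at h2
    rw [← h2]

/-- the `k`-th power of a word -/
def pw (w : List (V × Bool)) (k : ℕ) : List (V × Bool) := (List.replicate k w).flatten

lemma pw_zero (w : List (V × Bool)) : pw w 0 = [] := rfl

lemma pw_succ (w : List (V × Bool)) (k : ℕ) : pw w (k + 1) = w ++ pw w k := by
  rw [pw, List.replicate_succ, List.flatten_cons]
  rfl

lemma pw_length (w : List (V × Bool)) (k : ℕ) : (pw w k).length = k * w.length := by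
  induction k with
  | zero => simp [pw_zero]
  | succ k ih =>
    rw [pw_succ, List.length_append, ih]
    ring

lemma spell_pw (w : List (V × Bool)) (k : ℕ) :
    spellRAAG Γ (pw w k) = (spellRAAG Γ w) ^ k := by
  induction k with
  | zero => rw [pw_zero, pow_zero, spell_nil]
  | succ k ih => rw [pw_succ, spell_append, ih, pow_succ']

lemma pw_drop {w : List (V × Bool)} {k q : ℕ} (h : q ≤ k) :
    (pw w k).drop (q * w.length) = pw w (k - q) := by
  induction q with
  | zero => simp
  | succ q ih =>
    have hq : q ≤ k := by omega
    have e1 : (q + 1) * w.length = q * w.length + w.length := by ring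
    rw [e1, ← List.drop_drop, ih hq]
    have e2 : k - q = (k - (q + 1)) + 1 := by omega
    rw [e2, pw_succ, List.drop_left]

/-- If `w` is a shortest word in its conjugacy class, all its powers are reduced. -/
lemma pw_red {w : List (V × Bool)}
    (hmin : ∀ v, IsConj (spellRAAG Γ w) (spellRAAG Γ v) → w.length ≤ v.length) (k : ℕ) :
    ¬ Pat Γ (pw w k) := by
  rintro hPat
  obtain ⟨x, p0, s0, hx⟩ := hPat
  obtain ⟨w₁, m, w₂, hdec, hm, -, -⟩ := pfilter_eq_pair hx
  have hmadj : ∀ z ∈ m, Γ.Adj x.1 z.1 := by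
    intro z hz
    have h := hm z hz
    push_neg at h
    exact h.2
  by_cases hw0 : w = []
  · have h0 : (pw w k).length = 0 := by rw [pw_length, hw0]; simp
    rw [hdec] at h0
    simp at h0
  have hℓ : 0 < w.length := List.length_pos_iff.2 hw0
  have hlen : k * w.length = w₁.length + 2 + (m.length + w₂.length) := by
    have h := congrArg List.length hdec
    rw [pw_length] at h
    simp at h
    omega
  have hq : w₁.length / w.length < k :=
    (Nat.div_lt_iff_lt_mul hℓ).2 (by omega)
  have hr : w₁.length % w.length < w.length := Nat.mod_lt _ hℓ
  set u := w.take (w₁.length % w.length) with hudef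
  set vt := w.drop (w₁.length % w.length) with hvtdef
  have hw_uv : w = u ++ vt := (List.take_append_drop _ w).symm
  have hu_len : u.length = w₁.length % w.length := by
    rw [hudef, List.length_take]
    omega
  have hvt_len : vt.length = w.length - w₁.length % w.length := by
    rw [hvtdef, List.length_drop]
  have hdrop : (pw w k).drop w₁.length = vt ++ pw w (k - w₁.length / w.length - 1) := by
    have e1 : w₁.length = (w₁.length / w.length) * w.length + w₁.length % w.length :=
      (Nat.div_add_mod' _ _).symm
    conv_lhs => rw [e1]
    rw [← List.drop_drop, pw_drop (le_of_lt hq)]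
    have e2 : k - w₁.length / w.length = (k - w₁.length / w.length - 1) + 1 := by omega
    conv_lhs => rw [e2, pw_succ]
    rw [List.drop_append_of_le_length (by omega), ← hvtdef]
  have hdrop2 : (pw w k).drop w₁.length = x :: (m ++ invL x :: w₂) := by
    rw [hdec]
    exact List.drop_left (l₁ := w₁)
  have E : vt ++ pw w (k - w₁.length / w.length - 1) = x :: (m ++ invL x :: w₂) := by
    rw [← hdrop, hdrop2]
  have hconj_rot : IsConj (spellRAAG Γ w) (spellRAAG Γ (vt ++ u)) := by
    rw [isConj_iff]
    refine ⟨(spellRAAG Γ u)⁻¹, ?_⟩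
    conv_lhs => rw [hw_uv]
    rw [spell_append, spell_append]
    group
  by_cases hA : m.length + 2 ≤ vt.length
  · -- pattern inside one period
    have E' : vt ++ pw w (k - w₁.length / w.length - 1) = (x :: m ++ [invL x]) ++ w₂ := by
      rw [E]; simp
    obtain ⟨s', hvt1, -⟩ := append_eq_append_of_le E' (by simp only [List.length_cons, List.length_append, List.length_nil]; omega)
    have hwdec : w = u ++ x :: (m ++ invL x :: s') := by
      rw [hw_uv, hvt1]; simp
    have heq : spellRAAG Γ w = spellRAAG Γ (u ++ m ++ s') := by
      conv_lhs => rw [hwdec]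
      exact spell_reduce hmadj u s'
    have hle := hmin (u ++ m ++ s') (by rw [← heq])
    have hL1 := congrArg List.length hwdec
    simp at hL1
    simp at hle
    omega
  · push_neg at hA
    have E'' : (x :: m) ++ (invL x :: w₂) = vt ++ pw w (k - w₁.length / w.length - 1) := by
      rw [E]; simp
    obtain ⟨m₂, hxm, hP⟩ := append_eq_append_of_le E'' (by simp only [List.length_cons, List.length_append, List.length_nil]; omega)
    have hvtne : vt ≠ [] := by
      intro h0
      rw [h0] at hvt_len
      simp at hvt_len
      omega
    obtain ⟨x', m₁, hvt1⟩ := List.exists_cons_of_ne_nil hvtne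
    rw [hvt1] at hxm
    have hx'x : x' = x := by
      have h := (List.cons.injEq _ _ _ _ ▸ hxm.symm).1
      exact h
    have hmm : m = m₁ ++ m₂ := by
      have h := (List.cons.injEq _ _ _ _ ▸ hxm.symm).2
      exact h.symm
    have hk1 : k - w₁.length / w.length - 1 ≠ 0 := by
      intro h0
      rw [h0, pw_zero] at hP
      simp at hP
    have hPw : w ++ pw w (k - w₁.length / w.length - 2) = m₂ ++ invL x :: w₂ := by
      have e : k - w₁.length / w.length - 1 = (k - w₁.length / w.length - 2) + 1 := by omega
      rw [e, pw_succ] at hP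
      rw [← hP]
    by_cases hB2 : w.length ≤ m₂.length
    · obtain ⟨E2, hm2w, -⟩ := append_eq_append_of_le hPw.symm (by omega)
      have hxmem : x ∈ w := by
        rw [hw_uv, hvt1, hx'x]; simp
      have hxm2 : x ∈ m₂ := by rw [hm2w]; simp [hxmem]
      exact Γ.irrefl (hmadj x (by rw [hmm]; simp [hxm2]))
    · push_neg at hB2
      have hPw' : w ++ pw w (k - w₁.length / w.length - 2) = (m₂ ++ [invL x]) ++ w₂ := by
        rw [hPw]; simp
      obtain ⟨s₃, hw3, -⟩ := append_eq_append_of_le hPw' (by simp only [List.length_cons, List.length_append, List.length_nil]; omega)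
      by_cases hC : m₂.length + 1 ≤ u.length
      · have hw_uv' : u ++ vt = (m₂ ++ [invL x]) ++ s₃ := hw_uv.symm.trans hw3
        obtain ⟨s₄, hu4, -⟩ := append_eq_append_of_le hw_uv' (by simp only [List.length_cons, List.length_append, List.length_nil]; omega)
        have hkey : vt ++ u = [] ++ x :: (m ++ invL x :: s₄) := by
          rw [hvt1, hx'x, hu4, hmm]; simp
        have hsp : spellRAAG Γ (vt ++ u) = spellRAAG Γ ([] ++ m ++ s₄) := by
          rw [hkey]
          exact spell_reduce hmadj [] s₄
        have hconj2 : IsConj (spellRAAG Γ w) (spellRAAG Γ ([] ++ m ++ s₄)) := by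
          rw [← hsp]
          exact hconj_rot
        have hle := hmin _ hconj2
        have hL1 := congrArg List.length hkey
        have hL2 := congrArg List.length hw_uv
        simp at hL1 hL2 hle
        omega
      · push_neg at hC
        have hagain : m₂ ++ (invL x :: s₃) = u ++ (x :: m₁) := by
          have h1 : u ++ (x :: m₁) = w := by rw [hw_uv, hvt1, hx'x]
          rw [h1, hw3]; simp
        obtain ⟨E3, hm2u, hE3⟩ := append_eq_append_of_le hagain (by omega)
        cases E3 with
        | nil =>
          simp at hE3
          exact ne_invL x hE3.1
        | cons e E3' =>
          have he : x = e := by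
            have h := (List.cons.injEq _ _ _ _ ▸ hE3).1
            exact h
          have hxm2 : x ∈ m₂ := by rw [hm2u, ← he]; simp
          exact Γ.irrefl (hmadj x (by rw [hmm]; simp [hxm2]))


lemma spell_surj (Γ : SimpleGraph V) (g : RAAG Γ) : ∃ w, spellRAAG Γ w = g := by
  obtain ⟨x, hx⟩ : ∃ x, PresentedGroup.mk (raagRels Γ) x = g :=
    QuotientGroup.mk'_surjective _ g
  refine ⟨x.toWord, ?_⟩
  unfold spellRAAG
  rw [FreeGroup.mk_toWord]
  exact hx

end RaagNF

open RaagNF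

theorem minConjWordLength_pow
    {V : Type*} [Fintype V] (Γ : SimpleGraph V) (g : RAAG Γ) (n : ℕ) (hn : 0 < n) :
    minConjWordLength Γ (g ^ n) = n * minConjWordLength Γ g := by
  classical
  obtain ⟨w₀, hw₀⟩ := spell_surj Γ g
  have hne : {l : ℕ | ∃ w, IsConj g (spellRAAG Γ w) ∧ w.length = l}.Nonempty :=
    ⟨w₀.length, w₀, by rw [hw₀], rfl⟩
  obtain ⟨w, hconj, hwlen⟩ := Nat.sInf_mem hne
  have hwlen' : w.length = minConjWordLength Γ g := hwlen
  have hminw : ∀ v, IsConj (spellRAAG Γ w) (spellRAAG Γ v) → w.length ≤ v.length := by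
    intro v hv
    have hmem : v.length ∈ {l : ℕ | ∃ u, IsConj g (spellRAAG Γ u) ∧ u.length = l} :=
      ⟨v, hconj.trans hv, rfl⟩
    have hle := Nat.sInf_le hmem
    omega
  have hRed := pw_red hminw
  have hpow : IsConj (g ^ n) (spellRAAG Γ (pw w n)) := by
    rw [spell_pw]
    obtain ⟨c, hc⟩ := isConj_iff.1 hconj
    rw [isConj_iff]
    exact ⟨c, by rw [← hc, conj_pow]⟩
  have hne2 : {l : ℕ | ∃ u, IsConj (g ^ n) (spellRAAG Γ u) ∧ u.length = l}.Nonempty :=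
    ⟨(pw w n).length, pw w n, hpow, rfl⟩
  have hub : minConjWordLength Γ (g ^ n) ≤ n * w.length := by
    have := Nat.sInf_le (s := {l : ℕ | ∃ u, IsConj (g ^ n) (spellRAAG Γ u) ∧ u.length = l})
      ⟨pw w n, hpow, rfl⟩
    rw [pw_length] at this
    exact this
  obtain ⟨v, hvconj, hvlen⟩ := Nat.sInf_mem hne2
  have hvlen' : v.length = minConjWordLength Γ (g ^ n) := hvlen
  obtain ⟨c, hc⟩ := isConj_iff.1 hvconj
  obtain ⟨d, hd⟩ := isConj_iff.1 hconj
  obtain ⟨uc, huc⟩ := spell_surj Γ c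
  obtain ⟨ud, hud⟩ := spell_surj Γ d
  have key : ∀ k : ℕ,
      (n * k) * w.length ≤ k * v.length + 2 * (uc.length + ud.length) := by
    intro k
    have hspell : spellRAAG Γ
        (ud ++ (FreeGroup.invRev uc ++ (pw v k ++ (uc ++ FreeGroup.invRev ud))))
        = spellRAAG Γ (pw w (n * k)) := by
      rw [spell_append, spell_append, spell_append, spell_append, spell_invRev, spell_invRev,
        spell_pw, spell_pw, huc, hud, ← hc, ← hd, conj_pow, conj_pow, ← pow_mul]
      group
    have hgeo := red_geodesic (hRed (n * k)) hspell
    rw [pw_length] at hgeo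
    simp only [List.length_append, pw_length, FreeGroup.invRev_length] at hgeo
    omega
  have hge : n * w.length ≤ v.length := by
    by_contra hlt
    push_neg at hlt
    have hK := key (2 * (uc.length + ud.length) + 1)
    have e1 : (n * (2 * (uc.length + ud.length) + 1)) * w.length
        = (2 * (uc.length + ud.length) + 1) * (n * w.length) := by ring
    have e2 : (2 * (uc.length + ud.length) + 1) * (v.length + 1)
        ≤ (2 * (uc.length + ud.length) + 1) * (n * w.length) :=
      Nat.mul_le_mul_left _ (by omega)
    have e3 : (2 * (uc.length + ud.length) + 1) * (v.length + 1)
        = (2 * (uc.length + ud.length) + 1) * v.length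
          + (2 * (uc.length + ud.length) + 1) := by ring
    have e4 : (2 * (uc.length + ud.length) + 1) * v.length
        = v.length * (2 * (uc.length + ud.length) + 1) := by ring
    have e5 : (2 * (uc.length + ud.length) + 1) * v.length ≥ 0 := Nat.zero_le _
    omega
  have hfin : minConjWordLength Γ (g ^ n) = n * w.length := by
    omega
  rw [hfin, ← hwlen']
end
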